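/- arXiv:2303.12222 — 9 statements merged into one kernel-verified Lean document; each statement's English description precedes it below -/
import Mathlib

section
/- For all integers m ≥ 2 and n ≥ 3, the cylindrical grid graph P_m □ C_n (the Cartesian product of the path on m vertices with the cycle on n vertices) is non-distance magic, i.e., it admits no distance magic labeling. (This settles Vilfred's 1996 conjecture.) -/
open Finset SimpleGraph
open scoped Classical

noncomputable section

variable {V : Type*}

/-- The open neighbourhood of `u` in `G`, as a `Finset`. -/
def nbr [Fintype V] (G : SimpleGraph V) (u : V) : Finset V :=
  G.neighborFinset u

/-- `G` is distance magic if there is a bijective labeling of its vertices by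
`{1, …, |V|}` such that the sum of the labels over every open neighbourhood is
the same constant `S`. -/
def IsDistanceMagic [Fintype V] (G : SimpleGraph V) : Prop :=
  ∃ f : V ≃ Fin (Fintype.card V), ∃ S : ℕ,
    ∀ u : V, ∑ v ∈ nbr G u, ((f v : ℕ) + 1) = S

/-- A neighbourhood chain `N₁ N₂ ⋯ N_k` in `G` (0-indexed: `N_i = nbr G (u i)` for
`i < k`): the `uᵢ` are distinct, consecutive neighbourhoods intersect, and
non-consecutive neighbourhoods are disjoint except possibly the first and last. -/
structure NbhChain [Fintype V] (G : SimpleGraph V) (k : ℕ) where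
  hk : 2 ≤ k
  u : ℕ → V
  inj : ∀ i j, i < k → j < k → u i = u j → i = j
  consec : ∀ i, i + 1 < k → (nbr G (u i) ∩ nbr G (u (i + 1))).Nonempty
  nonconsec : ∀ i j, j < k → i + 1 < j → j - i < k - 1 →
    nbr G (u i) ∩ nbr G (u j) = ∅

/-- A Type-1 neighbourhood chain (NC-T1) of length `n` in `G`. -/
structure NCT1 [Fintype V] (G : SimpleGraph V) (n : ℕ) extends NbhChain G n where
  m : ℕ
  hm : n + 1 ≤ m
  v : ℕ → V
  vinj : ∀ i j, i < m → j < m → v i = v j → i = j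
  disj_uv : ∀ i j, i < n → j < m → u i ≠ v j
  nonadj : ∀ i j, i < n → j < n → ¬ G.Adj (u i) (u j)
  nbh_sub : ∀ i, i < n → ∀ x ∈ nbr G (u i), ∃ j, j < m ∧ x = v j
  nbh_nonempty : ∀ i, i < n → (nbr G (u i)).Nonempty
  first : nbr G (u 0) \ nbr G (u 1) = {v 0}
  last : nbr G (u (n - 1)) \ nbr G (u (n - 2)) = {v (n - 1)}
  succ_sdiff_sub : ∀ i, i + 2 < n →
    nbr G (u (i + 1)) \ nbr G (u i) ⊆ nbr G (u (i + 2))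
  sdiff_nonempty : ∀ i, i + 1 < n →
    (nbr G (u i) \ nbr G (u (i + 1))).Nonempty ∧
      (nbr G (u (i + 1)) \ nbr G (u i)).Nonempty

/-- A Type-2 pair of neighbourhood chains (NC-T2): two NC-T1 chains of the same
length `n` satisfying the linking conditions (i) and (ii). -/
structure NCT2 [Fintype V] (G : SimpleGraph V) (n : ℕ) where
  A : NCT1 G n
  B : NCT1 G n
  cond1_left : nbr G (A.u 0) ∩ nbr G (A.u 1) ∩ nbr G (B.u 0)
      = nbr G (B.u 0) \ nbr G (B.u 1)
  cond1_left_ne : (nbr G (B.u 0) \ nbr G (B.u 1)).Nonempty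
  cond1_right : nbr G (A.u (n - 1)) ∩ nbr G (B.u (n - 1)) ∩ nbr G (B.u (n - 2))
      = nbr G (A.u (n - 1)) \ nbr G (A.u (n - 2))
  cond1_right_ne : (nbr G (A.u (n - 1)) \ nbr G (A.u (n - 2))).Nonempty
  cond2 : ∀ i, 1 ≤ i → i + 1 < n →
    (nbr G (A.u i) ∩ nbr G (A.u (i + 1)) ∩ nbr G (B.u i) ∩ nbr G (B.u (i - 1))).Nonempty

/-- A Type-3 pair of neighbourhood chains (NC-T3) in `G`: two neighbourhood chains
`c1`, `c2` of lengths `n1, n2 ≥ 2`, whose vertex sets `V₁, V₂` together with a set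
`V₃` (of size `n3 ≥ max n1 n2 + 3`) containing all their neighbourhoods are pairwise
disjoint, `V₁` and `V₂` are stable, and conditions (i), (ii) hold. -/
structure NCT3 [Fintype V] (G : SimpleGraph V) (n1 n2 : ℕ) where
  hn1 : 2 ≤ n1
  hn2 : 2 ≤ n2
  n3 : ℕ
  hn3 : max n1 n2 + 3 ≤ n3
  c1 : NbhChain G n1
  c2 : NbhChain G n2
  w : ℕ → V
  winj : ∀ i j, i < n3 → j < n3 → w i = w j → i = j
  disj12 : ∀ i j, i < n1 → j < n2 → c1.u i ≠ c2.u j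
  disj13 : ∀ i j, i < n1 → j < n3 → c1.u i ≠ w j
  disj23 : ∀ i j, i < n2 → j < n3 → c2.u i ≠ w j
  stable1 : ∀ i j, i < n1 → j < n1 → ¬ G.Adj (c1.u i) (c1.u j)
  stable2 : ∀ i j, i < n2 → j < n2 → ¬ G.Adj (c2.u i) (c2.u j)
  nbh_sub1 : ∀ i, i < n1 → ∀ x ∈ nbr G (c1.u i), ∃ k, k < n3 ∧ x = w k
  nbh_sub2 : ∀ i, i < n2 → ∀ x ∈ nbr G (c2.u i), ∃ k, k < n3 ∧ x = w k
  nbh_nonempty1 : ∀ i, i < n1 → (nbr G (c1.u i)).Nonempty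
  nbh_nonempty2 : ∀ i, i < n2 → (nbr G (c2.u i)).Nonempty
  propI1 : ∀ i, i + 2 < n1 →
    nbr G (c1.u (i + 1)) \ nbr G (c1.u i) ⊆ nbr G (c1.u (i + 2))
  propI1' : ∀ i, i + 1 < n1 →
    (nbr G (c1.u i) \ nbr G (c1.u (i + 1))).Nonempty ∧
      (nbr G (c1.u (i + 1)) \ nbr G (c1.u i)).Nonempty
  propI2 : ∀ i, i + 2 < n2 →
    nbr G (c2.u (i + 1)) \ nbr G (c2.u i) ⊆ nbr G (c2.u (i + 2))
  propI2' : ∀ i, i + 1 < n2 →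
    (nbr G (c2.u i) \ nbr G (c2.u (i + 1))).Nonempty ∧
      (nbr G (c2.u (i + 1)) \ nbr G (c2.u i)).Nonempty
  propII : ∃ i j r : ℕ, i + 1 < n1 ∧ j + 1 < n2 ∧ r + 1 ≤ min n1 n2 / 2 ∧
    i + 1 + 2 * r < n1 ∧ j + 1 + 2 * r < n2 ∧
    nbr G (c2.u j) \ nbr G (c2.u (j + 1)) ⊆ nbr G (c1.u i) \ nbr G (c1.u (i + 1)) ∧
    nbr G (c1.u (i + 1 + 2 * r)) \ nbr G (c1.u (i + 2 * r)) ⊆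
      nbr G (c2.u (j + 1 + 2 * r)) \ nbr G (c2.u (j + 2 * r)) ∧
    1 ≤ ((nbr G (c1.u i) \ nbr G (c1.u (i + 1))) \
          (nbr G (c2.u j) \ nbr G (c2.u (j + 1)))).card +
        ((nbr G (c2.u (j + 1 + 2 * r)) \ nbr G (c2.u (j + 2 * r))) \
          (nbr G (c1.u (i + 1 + 2 * r)) \ nbr G (c1.u (i + 2 * r)))).card


private def dmCoeff (i : ℕ) : ℤ := if i % 2 = 0 then -((i/2 : ℕ) : ℤ) else ((i/2 : ℕ) : ℤ) + 1

private lemma dmCoeff_rec (i : ℕ) : dmCoeff (i+2) = 1 - 2 * dmCoeff (i+1) - dmCoeff i := by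
  unfold dmCoeff; split_ifs <;> omega

private lemma dmCoeff_zero : dmCoeff 0 = 0 := by unfold dmCoeff; simp

private lemma dmCoeff_one : dmCoeff 1 = 1 := by unfold dmCoeff; simp

private lemma dmCoeff_even {i : ℕ} (h : i % 2 = 0) : dmCoeff i + dmCoeff (i+1) = 1 := by
  unfold dmCoeff; split_ifs <;> omega

private lemma dmCoeff_odd {i : ℕ} (h : i % 2 = 1) : dmCoeff i + dmCoeff (i+1) = 0 := by
  unfold dmCoeff; split_ifs <;> omega

theorem aux_no_sol {R : Type*} [CommRing R] (M : ℕ) (L : ℕ → R → ℤ) (S : ℤ)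
    (hpos : ∀ i j, i < M + 2 → 1 ≤ L i j)
    (hinj : ∀ i i' (j j' : R), i < M + 2 → i' < M + 2 → L i j = L i' j' → i = i')
    (htop : ∀ j : R, L 1 j + L 0 (j-1) + L 0 (j+1) = S)
    (hmid : ∀ (i : ℕ) (j : R), i + 2 < M + 2 →
      L i j + L (i+2) j + L (i+1) (j-1) + L (i+1) (j+1) = S)
    (hbot : ∀ j : R, L M j + L (M+1) (j-1) + L (M+1) (j+1) = S) : False := by
  set A : ℕ → R → ℤ := fun i j => ∑ t ∈ Finset.range (i+1), L 0 (j + 2 * (t : R)) with hA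
  have A_zero : ∀ j : R, A 0 j = L 0 j := by
    intro j; simp [hA]
  have A_right : ∀ (i : ℕ) (j : R), A (i+1) j = A i j + L 0 (j + 2 * (i : R) + 2) := by
    intro i j
    simp only [hA]
    rw [Finset.sum_range_succ]
    congr 2
    push_cast; ring
  have A_left : ∀ (i : ℕ) (j : R), A (i+1) j = L 0 j + A i (j + 2) := by
    intro i j
    simp only [hA]
    rw [Finset.sum_range_succ']
    rw [add_comm]
    congr 1
    · congr 1; push_cast; ring
    · apply Finset.sum_congr rfl
      intro t _
      congr 1; push_cast; ring
  -- F1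
  have F1 : ∀ i, i < M + 2 → ∀ j : R, L i j = (-1)^i * A i (j - (i : R)) + dmCoeff i * S := by
    intro i
    induction i using Nat.twoStepInduction with
    | zero =>
      intro _ j
      rw [show ((0:ℕ):R) = 0 from Nat.cast_zero, sub_zero, A_zero, dmCoeff_zero]
      ring
    | one =>
      intro _ j
      have w : A 1 (j - ((1:ℕ):R)) = L 0 (j-1) + L 0 (j+1) := by
        rw [show ((1:ℕ):R) = 1 from Nat.cast_one]
        rw [A_right 0 (j-1), A_zero]
        rw [show (j - 1) + 2*((0:ℕ):R) + 2 = j + 1 by push_cast; ring]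
      rw [w, dmCoeff_one]
      linear_combination htop j
    | more i ih1 ih2 =>
      intro h j
      have h0 : i < M + 2 := by omega
      have h1 : i + 1 < M + 2 := by omega
      have e := hmid i j (by omega)
      rw [ih1 h0 j, ih2 h1 (j-1), ih2 h1 (j+1)] at e
      rw [show (j - 1) - ((i+1 : ℕ) : R) = j - (i:R) - 2 by push_cast; ring,
          show (j + 1) - ((i+1 : ℕ) : R) = j - (i:R) by push_cast; ring] at e
      have W1 : A (i+2) (j - (i:R) - 2) = A (i+1) (j - (i:R) - 2) + L 0 (j + (i:R) + 2) := by
        have w := A_right (i+1) (j - (i:R) - 2)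
        rw [show (j - (i:R) - 2) + 2 * ((i+1:ℕ):R) + 2 = j + (i:R) + 2 by push_cast; ring] at w
        exact w
      have W2 : A (i+1) (j - (i:R)) = A i (j - (i:R)) + L 0 (j + (i:R) + 2) := by
        have w := A_right i (j - (i:R))
        rw [show (j - (i:R)) + 2 * ((i:ℕ):R) + 2 = j + (i:R) + 2 by push_cast; ring] at w
        exact w
      rw [show ((i+2:ℕ) : R) = (i:R) + 2 by push_cast; ring,
          show j - ((i:R)+2) = j - (i:R) - 2 by ring]
      have hc := dmCoeff_rec i
      simp only [pow_succ] at e ⊢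
      linear_combination e - ((-1:ℤ)^i) * W1 + ((-1:ℤ)^i) * W2 - S * hc
  -- endgame
  rcases Nat.even_or_odd M with hM | hM
  · -- M even
    have hsM : (-1:ℤ)^M = 1 := hM.neg_one_pow
    have hsM1 : (-1:ℤ)^(M+1) = -1 := by rw [pow_succ, hsM]; ring
    have F2e : ∀ j : R, A (M+2) j = (dmCoeff M + 2*dmCoeff (M+1) - 1) * S := by
      intro j
      have e := hbot (j + ((M:R) + 2))
      rw [F1 M (by omega) _, F1 (M+1) (by omega) _, F1 (M+1) (by omega) _] at e
      rw [hsM, hsM1] at e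
      rw [show (j + ((M:R)+2)) - ((M:ℕ):R) = j + 2 by push_cast; ring,
          show (j + ((M:R)+2) - 1) - ((M+1:ℕ):R) = j by push_cast; ring,
          show (j + ((M:R)+2) + 1) - ((M+1:ℕ):R) = j + 2 by push_cast; ring] at e
      have W1 : A (M+2) j = A (M+1) j + L 0 (j + 2*(M:R) + 4) := by
        have w := A_right (M+1) j
        rw [show j + 2 * ((M+1:ℕ):R) + 2 = j + 2*(M:R) + 4 by push_cast; ring] at w
        exact w
      have W2 : A (M+1) (j+2) = A M (j+2) + L 0 (j + 2*(M:R) + 4) := by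
        have w := A_right M (j+2)
        rw [show (j+2) + 2 * ((M:ℕ):R) + 2 = j + 2*(M:R) + 4 by push_cast; ring] at w
        exact w
      linear_combination -e + W1 - W2
    have key : ∀ j : R, L (M+1) j = L 0 (j - (M:R) - 3) := by
      intro j
      have e1 := F1 (M+1) (by omega) j
      rw [hsM1, show ((M+1:ℕ):R) = (M:R)+1 by push_cast; ring] at e1
      have e2 := A_left (M+1) (j - (M:R) - 3)
      rw [show (j - (M:R) - 3) + 2 = j - ((M:R)+1) by ring] at e2
      have e3 := F2e (j - (M:R) - 3)
      have hpar : dmCoeff M + dmCoeff (M+1) = 1 := dmCoeff_even (Nat.even_iff.mp hM)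
      linear_combination e1 + e2 - e3 - S * hpar
    have := hinj (M+1) 0 (0:R) ((0:R) - (M:R) - 3) (by omega) (by omega) (key 0)
    omega
  · -- M odd
    have hsM : (-1:ℤ)^M = -1 := hM.neg_one_pow
    have hsM1 : (-1:ℤ)^(M+1) = 1 := by rw [pow_succ, hsM]; ring
    have F2o : ∀ j : R, A (M+2) j = (1 - dmCoeff M - 2*dmCoeff (M+1)) * S := by
      intro j
      have e := hbot (j + ((M:R) + 2))
      rw [F1 M (by omega) _, F1 (M+1) (by omega) _, F1 (M+1) (by omega) _] at e
      rw [hsM, hsM1] at e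
      rw [show (j + ((M:R)+2)) - ((M:ℕ):R) = j + 2 by push_cast; ring,
          show (j + ((M:R)+2) - 1) - ((M+1:ℕ):R) = j by push_cast; ring,
          show (j + ((M:R)+2) + 1) - ((M+1:ℕ):R) = j + 2 by push_cast; ring] at e
      have W1 : A (M+2) j = A (M+1) j + L 0 (j + 2*(M:R) + 4) := by
        have w := A_right (M+1) j
        rw [show j + 2 * ((M+1:ℕ):R) + 2 = j + 2*(M:R) + 4 by push_cast; ring] at w
        exact w
      have W2 : A (M+1) (j+2) = A M (j+2) + L 0 (j + 2*(M:R) + 4) := by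
        have w := A_right M (j+2)
        rw [show (j+2) + 2 * ((M:ℕ):R) + 2 = j + 2*(M:R) + 4 by push_cast; ring] at w
        exact w
      linear_combination e + W1 - W2
    have hzero : L M (0:R) + L 1 ((0:R) - (M:R) - 3) = 0 := by
      have e1 := F1 M (by omega) (0:R)
      rw [hsM] at e1
      have e4 := F1 1 (by omega) ((0:R) - (M:R) - 3)
      rw [pow_one, show ((0:R) - (M:R) - 3) - ((1:ℕ):R) = (0:R) - (M:R) - 4 by push_cast; ring] at e4
      have w4 : A 1 ((0:R) - (M:R) - 4) = L 0 ((0:R) - (M:R) - 4) + L 0 ((0:R) - (M:R) - 2) := by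
        rw [A_left 0 _, A_zero]
        rw [show ((0:R) - (M:R) - 4) + 2 = (0:R) - (M:R) - 2 by ring]
      rw [w4, dmCoeff_one] at e4
      have e2 := A_left (M+1) ((0:R) - (M:R) - 4)
      rw [show ((0:R) - (M:R) - 4) + 2 = (0:R) - (M:R) - 2 by ring] at e2
      have e3 := A_left M ((0:R) - (M:R) - 2)
      rw [show ((0:R) - (M:R) - 2) + 2 = (0:R) - (M:R) by ring] at e3
      have e5 := F2o ((0:R) - (M:R) - 4)
      have hw : (0:R) - ((M:ℕ):R) = (0:R) - (M:R) := by push_cast; ring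
      rw [hw] at e1
      have hpar : dmCoeff M + dmCoeff (M+1) = 0 := dmCoeff_odd (Nat.odd_iff.mp hM)
      linear_combination e1 + e4 - e5 + e2 + e3 + 2 * S * hpar
    have p1 := hpos M (0:R) (by omega)
    have p2 := hpos 1 ((0:R) - (M:R) - 3) (by omega)
    linarith

set_option maxHeartbeats 1000000 in
open scoped Fin.CommRing in
/-- For all integers `m ≥ 2` and `n ≥ 3`, the cylindrical grid graph
`P_m □ C_n` is non-distance magic (Vilfred's conjecture). -/
theorem cylindrical_grid_non_distance_magic (m n : ℕ) (hm : 2 ≤ m) (hn : 3 ≤ n) :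
    ¬ IsDistanceMagic (SimpleGraph.pathGraph m □ SimpleGraph.cycleGraph n) := by
  obtain ⟨l, rfl⟩ : ∃ l, m = l + 2 := ⟨m - 2, by omega⟩
  obtain ⟨k, rfl⟩ : ∃ k, n = k + 3 := ⟨n - 3, by omega⟩
  -- basic facts about the cycle component
  have hb2 : ∀ b : Fin (k+3), b - 1 ≠ b + 1 := by
    intro b hcon
    have h2 : (2 : Fin (k+3)) = 0 := by linear_combination -hcon
    have h3 := congrArg Fin.val h2
    simp [Fin.ext_iff] at h3
    rw [Nat.mod_eq_of_lt (by omega)] at h3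
    try omega
  have hcadj : ∀ b y : Fin (k+3), (cycleGraph (k+3)).Adj b y ↔ (y = b - 1 ∨ y = b + 1) := by
    intro b y
    rw [← mem_neighborFinset, cycleGraph_neighborFinset]
    simp
  -- explicit neighbourhoods (any `Fintype` instance)
  have hnbr0 : ∀ (j : Fin (k+3)) (inst : Fintype
        ((SimpleGraph.pathGraph (l+2) □ SimpleGraph.cycleGraph (k+3)).neighborSet
          ((⟨0, by omega⟩ : Fin (l+2)), j))),
      @SimpleGraph.neighborFinset _ _ _ inst
        = {((⟨1, by omega⟩ : Fin (l+2)), j), ((⟨0, by omega⟩ : Fin (l+2)), j-1),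
           ((⟨0, by omega⟩ : Fin (l+2)), j+1)} := by
    intro j inst
    have h1 : ∀ a : Fin (l+2), ((0:ℕ) + 1 = a.val ∨ a.val + 1 = 0) ↔ a = ⟨1, by omega⟩ := by
      intro a; simp only [Fin.ext_iff, Fin.val_mk]; omega
    ext ⟨a, b⟩
    simp only [mem_neighborFinset, boxProd_adj, pathGraph_adj, hcadj, Finset.mem_insert,
      Finset.mem_singleton, Prod.mk.injEq, h1]
    tauto
  have hnbrl : ∀ (j : Fin (k+3)) (inst : Fintype
        ((SimpleGraph.pathGraph (l+2) □ SimpleGraph.cycleGraph (k+3)).neighborSet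
          ((⟨l+1, by omega⟩ : Fin (l+2)), j))),
      @SimpleGraph.neighborFinset _ _ _ inst
        = {((⟨l, by omega⟩ : Fin (l+2)), j), ((⟨l+1, by omega⟩ : Fin (l+2)), j-1),
           ((⟨l+1, by omega⟩ : Fin (l+2)), j+1)} := by
    intro j inst
    have h1 : ∀ a : Fin (l+2), (l + 1 + 1 = a.val ∨ a.val + 1 = l + 1) ↔ a = ⟨l, by omega⟩ := by
      intro a; simp only [Fin.ext_iff, Fin.val_mk]; omega
    ext ⟨a, b⟩
    simp only [mem_neighborFinset, boxProd_adj, pathGraph_adj, hcadj, Finset.mem_insert,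
      Finset.mem_singleton, Prod.mk.injEq, h1]
    tauto
  have hnbrm : ∀ (i : ℕ) (h : i + 2 < l + 2) (j : Fin (k+3)) (inst : Fintype
        ((SimpleGraph.pathGraph (l+2) □ SimpleGraph.cycleGraph (k+3)).neighborSet
          ((⟨i+1, by omega⟩ : Fin (l+2)), j))),
      @SimpleGraph.neighborFinset _ _ _ inst
        = {((⟨i, by omega⟩ : Fin (l+2)), j), ((⟨i+2, h⟩ : Fin (l+2)), j),
           ((⟨i+1, by omega⟩ : Fin (l+2)), j-1), ((⟨i+1, by omega⟩ : Fin (l+2)), j+1)} := by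
    intro i h j inst
    have h1 : ∀ a : Fin (l+2), (i + 1 + 1 = a.val ∨ a.val + 1 = i + 1) ↔
        (a = ⟨i+2, h⟩ ∨ a = ⟨i, by omega⟩) := by
      intro a; simp only [Fin.ext_iff, Fin.val_mk]; omega
    ext ⟨a, b⟩
    simp only [mem_neighborFinset, boxProd_adj, pathGraph_adj, hcadj, Finset.mem_insert,
      Finset.mem_singleton, Prod.mk.injEq, h1]
    tauto
  -- non-membership facts used to evaluate the neighbourhood sums
  have hne0a : ∀ j : Fin (k+3), ((⟨1, by omega⟩ : Fin (l+2)), j) ∉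
      ({((⟨0, by omega⟩ : Fin (l+2)), j-1), ((⟨0, by omega⟩ : Fin (l+2)), j+1)} :
        Finset (Fin (l+2) × Fin (k+3))) := by
    intro j
    simp only [Finset.mem_insert, Finset.mem_singleton, Prod.mk.injEq, Fin.ext_iff, Fin.val_mk]
    omega
  have hnela : ∀ j : Fin (k+3), ((⟨l, by omega⟩ : Fin (l+2)), j) ∉
      ({((⟨l+1, by omega⟩ : Fin (l+2)), j-1), ((⟨l+1, by omega⟩ : Fin (l+2)), j+1)} :
        Finset (Fin (l+2) × Fin (k+3))) := by
    intro j
    simp only [Finset.mem_insert, Finset.mem_singleton, Prod.mk.injEq, Fin.ext_iff, Fin.val_mk]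
    omega
  have hnema : ∀ (i : ℕ) (h : i + 2 < l + 2) (j : Fin (k+3)),
      ((⟨i, by omega⟩ : Fin (l+2)), j) ∉
      ({((⟨i+2, h⟩ : Fin (l+2)), j), ((⟨i+1, by omega⟩ : Fin (l+2)), j-1),
        ((⟨i+1, by omega⟩ : Fin (l+2)), j+1)} : Finset (Fin (l+2) × Fin (k+3))) := by
    intro i h j
    simp only [Finset.mem_insert, Finset.mem_singleton, Prod.mk.injEq, Fin.ext_iff, Fin.val_mk]
    omega
  have hnemb : ∀ (i : ℕ) (h : i + 2 < l + 2) (j : Fin (k+3)),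
      ((⟨i+2, h⟩ : Fin (l+2)), j) ∉
      ({((⟨i+1, by omega⟩ : Fin (l+2)), j-1),
        ((⟨i+1, by omega⟩ : Fin (l+2)), j+1)} : Finset (Fin (l+2) × Fin (k+3))) := by
    intro i h j
    simp only [Finset.mem_insert, Finset.mem_singleton, Prod.mk.injEq, Fin.ext_iff, Fin.val_mk]
    omega
  have hnec : ∀ (a : Fin (l+2)) (j : Fin (k+3)), (a, j-1) ∉
      ({(a, j+1)} : Finset (Fin (l+2) × Fin (k+3))) := by
    intro a j
    simp only [Finset.mem_singleton, Prod.mk.injEq, not_and]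
    intro _ hc
    exact hb2 j hc
  rintro ⟨f, S, hf⟩
  -- the integer labelling, indexed by row in ℕ and column in the ring Fin (k+3)
  set Lab : ℕ → Fin (k+3) → ℤ :=
    fun i j => if h : i < l + 2 then ((f (⟨i, h⟩, j) : ℕ) : ℤ) + 1 else 0 with hLab
  have Lab_eq : ∀ (i : ℕ) (h : i < l + 2) (j : Fin (k+3)),
      Lab i j = ((f (⟨i, h⟩, j) : ℕ) : ℤ) + 1 := fun i h j => dif_pos h
  clear_value Lab
  apply aux_no_sol l Lab (S : ℤ)
  · -- positivity
    intro i j hi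
    rw [Lab_eq i hi j]
    exact le_add_of_nonneg_left (Int.natCast_nonneg _)
  · -- injectivity on rows
    intro i i' j j' hi hi' he
    rw [Lab_eq i hi j, Lab_eq i' hi' j'] at he
    have h4 : ((f (⟨i, hi⟩, j) : ℕ) : ℤ) = ((f (⟨i', hi'⟩, j') : ℕ) : ℤ) := by linarith
    have h4' : (f (⟨i, hi⟩, j) : ℕ) = (f (⟨i', hi'⟩, j') : ℕ) := Nat.cast_injective h4
    have h5 := f.injective (Fin.val_injective h4')
    rw [Prod.ext_iff] at h5
    exact congrArg Fin.val h5.1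
  · -- top row equation
    intro j
    have c0 : (0:ℕ) < l + 2 := by omega
    have c1 : (1:ℕ) < l + 2 := by omega
    have h := hf ((⟨0, by omega⟩ : Fin (l+2)), j)
    rw [nbr, hnbr0 j _, Finset.sum_insert (hne0a j), Finset.sum_insert (hnec _ j),
      Finset.sum_singleton] at h
    rw [Lab_eq 1 c1 j, Lab_eq 0 c0 (j-1), Lab_eq 0 c0 (j+1)]
    zify at h
    linarith [h]
  · -- middle rows equation
    intro i j h
    have hi0 : i < l + 2 := by omega
    have hi1 : i + 1 < l + 2 := by omega
    have h6 := hf ((⟨i+1, by omega⟩ : Fin (l+2)), j)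
    rw [nbr, hnbrm i h j _, Finset.sum_insert (hnema i h j),
      Finset.sum_insert (hnemb i h j), Finset.sum_insert (hnec _ j),
      Finset.sum_singleton] at h6
    rw [Lab_eq i hi0 j, Lab_eq (i+2) h j, Lab_eq (i+1) hi1 (j-1),
      Lab_eq (i+1) hi1 (j+1)]
    zify at h6
    linarith [h6]
  · -- bottom row equation
    intro j
    have cl : l < l + 2 := by omega
    have cl1 : l + 1 < l + 2 := by omega
    have h := hf ((⟨l+1, by omega⟩ : Fin (l+2)), j)
    rw [nbr, hnbrl j _, Finset.sum_insert (hnela j), Finset.sum_insert (hnec _ j),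
      Finset.sum_singleton] at h
    rw [Lab_eq l cl j, Lab_eq (l+1) cl1 (j-1), Lab_eq (l+1) cl1 (j+1)]
    zify at h
    linarith [h]
end
end

section
/- Any finite simple graph G containing a Type-3 pair of neighbourhood chains (NC-T3) is non-distance magic, i.e., admits no distance magic labeling. -/
open Finset SimpleGraph
open scoped Classical

noncomputable section

variable {V : Type*}

section Aux

variable [Fintype V] {G : SimpleGraph V}

/-- If all neighbourhood sums equal `S`, then the sums over the two symmetric
difference parts of any two neighbourhoods agree. -/
lemma nct3_swap_sum (g : V → ℕ) (S : ℕ) (hS : ∀ u, ∑ v ∈ nbr G u, g v = S)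
    (a b : V) :
    ∑ v ∈ nbr G a \ nbr G b, g v = ∑ v ∈ nbr G b \ nbr G a, g v := by
  have h1 := Finset.sum_inter_add_sum_sdiff (nbr G a) (nbr G b) g
  have h2 := Finset.sum_inter_add_sum_sdiff (nbr G b) (nbr G a) g
  rw [hS a] at h1
  rw [hS b, Finset.inter_comm] at h2
  omega

/-- The basic step along a chain: `d_t + d_{t+1} = S`. -/
lemma nct3_chain_step {n : ℕ} (c : NbhChain G n) (g : V → ℕ) (S : ℕ)
    (hS : ∀ u, ∑ v ∈ nbr G u, g v = S)
    (hprop : ∀ i, i + 2 < n → nbr G (c.u (i + 1)) \ nbr G (c.u i) ⊆ nbr G (c.u (i + 2)))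
    (t a b : ℕ) (ha : a = t + 1) (hb : b = t + 2) (ht : t + 2 < n) (hn : 4 ≤ n) :
    (∑ v ∈ nbr G (c.u t) \ nbr G (c.u a), g v)
      + (∑ v ∈ nbr G (c.u a) \ nbr G (c.u b), g v) = S := by
  subst ha hb
  have hdisj : nbr G (c.u t) ∩ nbr G (c.u (t + 2)) = ∅ :=
    c.nonconsec t (t + 2) ht (by omega) (by omega)
  have hset : nbr G (c.u (t + 1)) ∩ nbr G (c.u (t + 2))
      = nbr G (c.u (t + 1)) \ nbr G (c.u t) := by
    apply subset_antisymm
    · intro x hx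
      simp only [Finset.mem_inter, Finset.mem_sdiff] at hx ⊢
      refine ⟨hx.1, fun hxt => ?_⟩
      have : x ∈ nbr G (c.u t) ∩ nbr G (c.u (t + 2)) := by
        simp [Finset.mem_inter, hxt, hx.2]
      simp [hdisj] at this
    · intro x hx
      have h2 := hprop t ht hx
      simp only [Finset.mem_inter, Finset.mem_sdiff] at hx ⊢
      exact ⟨hx.1, h2⟩
  have h1 := Finset.sum_inter_add_sum_sdiff (nbr G (c.u (t + 1))) (nbr G (c.u (t + 2))) g
  rw [hS, hset] at h1
  have hswap := nct3_swap_sum g S hS (c.u t) (c.u (t + 1))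
  omega

/-- Periodicity: `d_{i+2s} = d_i` along a chain. -/
lemma nct3_chain_period {n : ℕ} (c : NbhChain G n) (g : V → ℕ) (S : ℕ)
    (hS : ∀ u, ∑ v ∈ nbr G u, g v = S)
    (hprop : ∀ i, i + 2 < n → nbr G (c.u (i + 1)) \ nbr G (c.u i) ⊆ nbr G (c.u (i + 2)))
    (i : ℕ) (s : ℕ) (h : i + 2 * s + 1 < n) :
    ∑ v ∈ nbr G (c.u (i + 2 * s)) \ nbr G (c.u (i + 2 * s + 1)), g v
      = ∑ v ∈ nbr G (c.u i) \ nbr G (c.u (i + 1)), g v := by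
  induction s with
  | zero => simp
  | succ s ih =>
    have hn : 4 ≤ n := by omega
    have h1 := nct3_chain_step c g S hS hprop (i + 2 * s) (i + 2 * s + 1)
      (i + 2 * s + 2) rfl (by omega) (by omega) hn
    have h2 := nct3_chain_step c g S hS hprop (i + 2 * s + 1) (i + 2 * s + 2)
      (i + 2 * s + 3) rfl (by omega) (by omega) hn
    have h3 := ih (by omega)
    rw [show i + 2 * (s + 1) = i + 2 * s + 2 by ring,
        show i + 2 * s + 2 + 1 = i + 2 * s + 3 by ring]
    omega

end Aux

/-- Any finite simple graph containing a Type-3 pair of neighbourhood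
chains (NC-T3) is non-distance magic. -/
theorem nct3_non_distance_magic [Fintype V] (G : SimpleGraph V) (n1 n2 : ℕ)
    (T : NCT3 G n1 n2) : ¬ IsDistanceMagic G := by
  rintro ⟨f, S, hS⟩
  set g : V → ℕ := fun v => (f v : ℕ) + 1 with hg
  have hS' : ∀ u, ∑ v ∈ nbr G u, g v = S := hS
  obtain ⟨i, j, r, hi1, hj1, hr, hi2, hj2, hD, hE, hcard⟩ := T.propII
  rw [show i + 1 + 2 * r = i + 2 * r + 1 by omega,
      show j + 1 + 2 * r = j + 2 * r + 1 by omega] at hE hcard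
  -- abbreviations
  set D1 := nbr G (T.c1.u i) \ nbr G (T.c1.u (i + 1)) with hD1
  set D2 := nbr G (T.c2.u j) \ nbr G (T.c2.u (j + 1)) with hD2
  set E1 := nbr G (T.c1.u (i + 2 * r + 1)) \ nbr G (T.c1.u (i + 2 * r)) with hE1
  set E2 := nbr G (T.c2.u (j + 2 * r + 1)) \ nbr G (T.c2.u (j + 2 * r)) with hE2
  -- sums over the included sets split off
  have hsplitD : (∑ v ∈ D1 \ D2, g v) + ∑ v ∈ D2, g v = ∑ v ∈ D1, g v :=
    Finset.sum_sdiff hD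
  have hsplitE : (∑ v ∈ E2 \ E1, g v) + ∑ v ∈ E1, g v = ∑ v ∈ E2, g v :=
    Finset.sum_sdiff hE
  -- σ(E1) = σ(D1)
  have hE1eq : ∑ v ∈ E1, g v = ∑ v ∈ D1, g v := by
    have hsw := nct3_swap_sum g S hS' (T.c1.u (i + 2 * r + 1)) (T.c1.u (i + 2 * r))
    have hper := nct3_chain_period T.c1 g S hS' T.propI1 i r (by omega)
    rw [hE1, hsw, hD1, hper]
  -- σ(E2) = σ(D2)
  have hE2eq : ∑ v ∈ E2, g v = ∑ v ∈ D2, g v := by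
    have hsw := nct3_swap_sum g S hS' (T.c2.u (j + 2 * r + 1)) (T.c2.u (j + 2 * r))
    have hper := nct3_chain_period T.c2 g S hS' T.propI2 j r (by omega)
    rw [hE2, hsw, hD2, hper]
  -- positivity: a nonempty set has positive sum
  have hpos : ∀ t : Finset V, t.Nonempty → 1 ≤ ∑ v ∈ t, g v := by
    rintro t ⟨x, hx⟩
    calc 1 ≤ g x := by simp [hg]
    _ ≤ ∑ v ∈ t, g v := Finset.single_le_sum (f := g) (fun _ _ => Nat.zero_le _) hx
  have hone : 1 ≤ (∑ v ∈ D1 \ D2, g v) + ∑ v ∈ E2 \ E1, g v := by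
    rcases Nat.lt_or_ge 0 (D1 \ D2).card with h | h
    · have := hpos (D1 \ D2) (Finset.card_pos.mp h)
      omega
    · have h2 : 0 < (E2 \ E1).card := by omega
      have := hpos (E2 \ E1) (Finset.card_pos.mp h2)
      omega
  omega
end
end

section
/- Let G be a finite simple graph with four distinct vertices u₁, u₂, w₁, w₂ such that N(u₁) ∩ N(u₂) ≠ ∅ and N(w₁) ∩ N(w₂) ≠ ∅, and suppose: (i) the set differences N(u₁)∖N(u₂), N(u₂)∖N(u₁), N(w₁)∖N(w₂), N(w₂)∖N(w₁) are all nonempty; (ii) N(w₁)∖N(w₂) ⊆ N(u₁)∖N(u₂) and N(u₂)∖N(u₁) ⊆ N(w₂)∖N(w₁); and (iii) |(N(u₁)∖N(u₂)) ∖ (N(w₁)∖N(w₂))| + |(N(w₂)∖N(w₁)) ∖ (N(u₂)∖N(u₁))| ≥ 1. Then G is non-distance magic, i.e., G admits no distance magic labeling. -/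
open Finset SimpleGraph
open scoped Classical

noncomputable section

variable {V : Type*}

/-- If a finite simple graph has four distinct vertices `u₁, u₂, w₁, w₂`
with intersecting neighbourhood pairs satisfying conditions (i), (ii), (iii),
then it is non-distance magic. -/
theorem four_vertex_condition_non_distance_magic [Fintype V] (G : SimpleGraph V)
    (u1 u2 w1 w2 : V)
    (hd12 : u1 ≠ u2) (hd13 : u1 ≠ w1) (hd14 : u1 ≠ w2)
    (hd23 : u2 ≠ w1) (hd24 : u2 ≠ w2) (hd34 : w1 ≠ w2)
    (hu : (nbr G u1 ∩ nbr G u2).Nonempty)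
    (hw : (nbr G w1 ∩ nbr G w2).Nonempty)
    (hi1 : (nbr G u1 \ nbr G u2).Nonempty)
    (hi2 : (nbr G u2 \ nbr G u1).Nonempty)
    (hi3 : (nbr G w1 \ nbr G w2).Nonempty)
    (hi4 : (nbr G w2 \ nbr G w1).Nonempty)
    (hii1 : nbr G w1 \ nbr G w2 ⊆ nbr G u1 \ nbr G u2)
    (hii2 : nbr G u2 \ nbr G u1 ⊆ nbr G w2 \ nbr G w1)
    (hiii : 1 ≤ ((nbr G u1 \ nbr G u2) \ (nbr G w1 \ nbr G w2)).card +
        ((nbr G w2 \ nbr G w1) \ (nbr G u2 \ nbr G u1)).card) :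
    ¬ IsDistanceMagic G := by
  rintro ⟨f, S, hS⟩
  set g : V → ℕ := fun v => (f v : ℕ) + 1 with hg
  have key : ∀ a b : V, ∑ v ∈ nbr G a \ nbr G b, g v = ∑ v ∈ nbr G b \ nbr G a, g v := by
    intro a b
    have h1 : ∑ v ∈ nbr G a ∩ nbr G b, g v + ∑ v ∈ nbr G a \ nbr G b, g v = S := by
      rw [Finset.sum_inter_add_sum_sdiff]; exact hS a
    have h2 : ∑ v ∈ nbr G b ∩ nbr G a, g v + ∑ v ∈ nbr G b \ nbr G a, g v = S := by
      rw [Finset.sum_inter_add_sum_sdiff]; exact hS b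
    rw [Finset.inter_comm] at h2
    omega
  have e1 := key u1 u2
  have e2 := key w1 w2
  have e3 := Finset.sum_sdiff (f := g) hii1
  have e4 := Finset.sum_sdiff (f := g) hii2
  have hz : ∑ v ∈ (nbr G u1 \ nbr G u2) \ (nbr G w1 \ nbr G w2), g v = 0 ∧
      ∑ v ∈ (nbr G w2 \ nbr G w1) \ (nbr G u2 \ nbr G u1), g v = 0 := by
    constructor <;> omega
  have hcard : ∀ s : Finset V, ∑ v ∈ s, g v = 0 → s.card = 0 := by
    intro s hs
    rw [Finset.card_eq_zero]
    by_contra hne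
    obtain ⟨x, hx⟩ := Finset.nonempty_of_ne_empty hne
    have h1 := Finset.single_le_sum (f := g) (fun i _ => Nat.zero_le _) hx
    rw [hs] at h1
    simp [hg] at h1
  have c1 := hcard _ hz.1
  have c2 := hcard _ hz.2
  omega
end
end

section
/- Let G be a finite simple graph, let f be a distance magic labeling of G, and let N_1 N_2 ⋯ N_n be a neighbourhood chain in G (with N_i the open neighbourhood of a vertex u_i) satisfying: N_{i+1} ∖ N_i ⊆ N_{i+2} for 1 ≤ i ≤ n−2, and N_i ∖ N_{i+1} and N_{i+1} ∖ N_i nonempty for 1 ≤ i ≤ n−1. Then for every 1 ≤ i ≤ n−1 and every integer r ≥ 0 with i+1+2r ≤ n, we have ∑_{v ∈ N_i ∖ N_{i+1}} f(v) = ∑_{v ∈ N_{i+1+2r} ∖ N_{i+2r}} f(v). -/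
open Finset SimpleGraph
open scoped Classical

noncomputable section

variable {V : Type*}

/-- For a distance magic labeling `f` of `G` and a neighbourhood chain
`N₁ ⋯ N_n` satisfying `N_{i+1} ∖ N_i ⊆ N_{i+2}` and nonemptiness of the set
differences of consecutive neighbourhoods, the label sums satisfy
`∑_{N_i ∖ N_{i+1}} f = ∑_{N_{i+1+2r} ∖ N_{i+2r}} f` (0-indexed here). -/
theorem chain_sdiff_sums_eq [Fintype V] (G : SimpleGraph V) (n : ℕ)
    (C : NbhChain G n)
    (hsub : ∀ i, i + 2 < n →
      nbr G (C.u (i + 1)) \ nbr G (C.u i) ⊆ nbr G (C.u (i + 2)))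
    (hne : ∀ i, i + 1 < n →
      (nbr G (C.u i) \ nbr G (C.u (i + 1))).Nonempty ∧
        (nbr G (C.u (i + 1)) \ nbr G (C.u i)).Nonempty)
    (f : V ≃ Fin (Fintype.card V)) (S : ℕ)
    (hf : ∀ u : V, ∑ v ∈ nbr G u, ((f v : ℕ) + 1) = S)
    (i r : ℕ) (hir : i + 1 + 2 * r < n) :
    ∑ v ∈ nbr G (C.u i) \ nbr G (C.u (i + 1)), ((f v : ℕ) + 1) =
      ∑ v ∈ nbr G (C.u (i + 1 + 2 * r)) \ nbr G (C.u (i + 2 * r)), ((f v : ℕ) + 1) := by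
  induction r generalizing i with
  | zero =>
    simp only [Nat.mul_zero, Nat.add_zero] at hir ⊢
    have h1 := hf (C.u i)
    have h2 := hf (C.u (i + 1))
    have e1 := Finset.sum_inter_add_sum_sdiff (nbr G (C.u i)) (nbr G (C.u (i + 1)))
      (fun v => (f v : ℕ) + 1)
    have e2 := Finset.sum_inter_add_sum_sdiff (nbr G (C.u (i + 1))) (nbr G (C.u i))
      (fun v => (f v : ℕ) + 1)
    rw [Finset.inter_comm] at e2
    omega
  | succ r ih =>
    have hlt : i + 1 + 2 * r < n := by omega
    have step : ∀ j, j + 3 < n →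
        (∑ v ∈ nbr G (C.u (j + 1)) \ nbr G (C.u j), ((f v : ℕ) + 1)) =
        ∑ v ∈ nbr G (C.u (j + 3)) \ nbr G (C.u (j + 2)), ((f v : ℕ) + 1) := by
      intro j hj
      have key : ∀ a, a + 2 < n → 4 ≤ n →
          nbr G (C.u (a + 1)) \ nbr G (C.u a)
            = nbr G (C.u (a + 1)) ∩ nbr G (C.u (a + 2)) := by
        intro a ha hn4
        apply Finset.Subset.antisymm
        · intro x hx
          have hx' := Finset.mem_sdiff.mp hx
          exact Finset.mem_inter.mpr ⟨hx'.1, hsub a ha hx⟩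
        · intro x hx
          have hx' := Finset.mem_inter.mp hx
          refine Finset.mem_sdiff.mpr ⟨hx'.1, fun hxa => ?_⟩
          have hdisj := C.nonconsec a (a + 2) ha (by omega) (by omega)
          have hmem : x ∈ nbr G (C.u a) ∩ nbr G (C.u (a + 2)) :=
            Finset.mem_inter.mpr ⟨hxa, hx'.2⟩
          rw [hdisj] at hmem
          exact absurd hmem (Finset.notMem_empty x)
      have k1 := key j (by omega) (by omega)
      have k2 : nbr G (C.u (j + 2)) \ nbr G (C.u (j + 1))
          = nbr G (C.u (j + 2)) ∩ nbr G (C.u (j + 3)) := key (j + 1) (by omega) (by omega)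
      rw [Finset.inter_comm] at k1 k2
      have h2 := hf (C.u (j + 2))
      have h3 := hf (C.u (j + 3))
      have e2 := Finset.sum_inter_add_sum_sdiff (nbr G (C.u (j + 2))) (nbr G (C.u (j + 1)))
        (fun v => (f v : ℕ) + 1)
      have e3 := Finset.sum_inter_add_sum_sdiff (nbr G (C.u (j + 3))) (nbr G (C.u (j + 2)))
        (fun v => (f v : ℕ) + 1)
      rw [← k1] at e2
      rw [← k2] at e3
      omega
    have e := step (i + 2 * r) (by omega)
    have a1 : i + 2 * r + 1 = i + 1 + 2 * r := by omega
    have a2 : i + 2 * r + 3 = i + 1 + 2 * (r + 1) := by omega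
    have a3 : i + 2 * r + 2 = i + 2 * (r + 1) := by omega
    rw [a1, a2, a3] at e
    rw [ih i hlt, e]
end
end

section
/- Let G be a finite simple graph containing a Type-1 neighbourhood chain (NC-T1) of even length 2n (n ≥ 1). Then G is non-distance magic, i.e., admits no distance magic labeling. -/
open Finset SimpleGraph
open scoped Classical

noncomputable section

variable {V : Type*}

/-- A finite simple graph containing a Type-1 neighbourhood chain of
even length `2n` (`n ≥ 1`) is non-distance magic. -/
theorem nct1_even_length_non_distance_magic [Fintype V] (G : SimpleGraph V)
    (n : ℕ) (hn : 1 ≤ n) (C : NCT1 G (2 * n)) : ¬ IsDistanceMagic G := by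
  rintro ⟨f, S, hS⟩
  obtain ⟨q, rfl⟩ : ∃ q, n = q + 1 := ⟨n - 1, by omega⟩
  set g : V → ℤ := fun v => (f v : ℕ) + 1 with hg
  set N : ℕ → Finset V := fun i => nbr G (C.u i) with hN
  set σ : Finset V → ℤ := fun s => ∑ v ∈ s, g v with hσ
  set A : ℕ → Finset V := fun i => N i ∩ N (i + 1) with hA
  have hsplit : ∀ s t : Finset V, σ s = σ (s \ t) + σ (s ∩ t) := by
    intro s t
    simp only [hσ]
    rw [← Finset.sum_sdiff Finset.inter_subset_left,
      Finset.sdiff_inter_self_left, add_comm]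
  have hSval : ∀ i, σ (N i) = (S : ℤ) := by
    intro i
    have h := hS (C.u i)
    simp only [hσ, hg, hN]
    rw [← h]
    push_cast
    rfl
  -- first neighbourhood
  have h0 : σ (N 0) = g (C.v 0) + σ (A 0) := by
    have h := hsplit (N 0) (N 1)
    have hf : (N 0 : Finset V) \ N 1 = {C.v 0} := C.first
    rw [hf] at h
    simpa [hσ, hA] using h
  -- last neighbourhood
  have hlast : σ (N (2 * q + 1)) = g (C.v (2 * q + 1)) + σ (A (2 * q)) := by
    have hl := C.last
    have e1 : 2 * (q + 1) - 1 = 2 * q + 1 := by omega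
    have e2 : 2 * (q + 1) - 2 = 2 * q := by omega
    rw [e1, e2] at hl
    have h := hsplit (N (2 * q + 1)) (N (2 * q))
    have hl' : (N (2 * q + 1) : Finset V) \ N (2 * q) = {C.v (2 * q + 1)} := hl
    rw [hl', Finset.inter_comm] at h
    simpa [hσ, hA] using h
  -- middle neighbourhoods
  have hmid : ∀ i, i + 3 ≤ 2 * q + 2 → σ (N (i + 1)) = σ (A i) + σ (A (i + 1)) := by
    intro i hi
    have hsub : (N (i + 1) : Finset V) \ N i = A (i + 1) := by
      apply Finset.Subset.antisymm
      · intro x hx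
        rw [Finset.mem_sdiff] at hx
        have hx2 : x ∈ N (i + 2) :=
          C.succ_sdiff_sub i (by omega) (Finset.mem_sdiff.2 hx)
        exact Finset.mem_inter.2 ⟨hx.1, hx2⟩
      · intro x hx
        rw [hA, Finset.mem_inter] at hx
        have hd := C.nonconsec i (i + 2) (by omega) (by omega) (by omega)
        refine Finset.mem_sdiff.2 ⟨hx.1, fun hxi => ?_⟩
        have hmem : x ∈ nbr G (C.u i) ∩ nbr G (C.u (i + 2)) :=
          Finset.mem_inter.2 ⟨hxi, hx.2⟩
        rw [hd] at hmem
        exact absurd hmem (Finset.notMem_empty x)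
    have h := hsplit (N (i + 1)) (N i)
    rw [hsub, Finset.inter_comm] at h
    rw [h, hA]
    ring
  -- telescoping partial sums
  have claim : ∀ j, j + 1 ≤ 2 * q + 1 →
      ∑ i ∈ Finset.range (j + 1), (-1 : ℤ) ^ i * σ (N i)
        = g (C.v 0) + (-1) ^ j * σ (A j) := by
    intro j
    induction j with
    | zero => intro _; simp [h0]
    | succ j ih =>
      intro hj
      rw [Finset.sum_range_succ, ih (by omega), hmid j (by omega)]
      ring
  -- alternating sum equals zero
  have hsum0 : ∑ i ∈ Finset.range (2 * q + 2), (-1 : ℤ) ^ i * σ (N i) = 0 := by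
    have hcong : ∀ i ∈ Finset.range (2 * q + 2),
        (-1 : ℤ) ^ i * σ (N i) = (-1) ^ i * (S : ℤ) := by
      intro i _; rw [hSval]
    rw [Finset.sum_congr rfl hcong, ← Finset.sum_mul, neg_one_geom_sum]
    have : Even (2 * q + 2) := ⟨q + 1, by ring⟩
    simp [this]
  -- alternating sum equals g v0 - g v(2q+1)
  have hsum1 : ∑ i ∈ Finset.range (2 * q + 2), (-1 : ℤ) ^ i * σ (N i)
      = g (C.v 0) - g (C.v (2 * q + 1)) := by
    have e : 2 * q + 2 = (2 * q + 1) + 1 := by ring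
    rw [e, Finset.sum_range_succ, claim (2 * q) (by omega), hlast]
    have p1 : (-1 : ℤ) ^ (2 * q) = 1 := by
      rw [pow_mul]; norm_num
    have p2 : (-1 : ℤ) ^ (2 * q + 1) = -1 := by
      rw [pow_succ, p1]; ring
    rw [p1, p2]; ring
  have hgeq : g (C.v 0) = g (C.v (2 * q + 1)) := by
    rw [hsum0] at hsum1; linarith
  have hfeq : f (C.v 0) = f (C.v (2 * q + 1)) := by
    have : ((f (C.v 0) : ℕ) : ℤ) = ((f (C.v (2 * q + 1)) : ℕ) : ℤ) := by
      simpa [hg] using hgeq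
    exact Fin.ext (by exact_mod_cast this)
  have hveq : C.v 0 = C.v (2 * q + 1) := f.injective hfeq
  have hm := C.hm
  have := C.vinj 0 (2 * q + 1) (by omega) (by omega) hveq
  omega
end
end

section
/- For all integers m ≥ 2 and n ≥ 3, the cylindrical grid graph P_m □ C_n contains a Type-2 pair of neighbourhood chains (NC-T2), i.e., two Type-1 neighbourhood chains of equal length forming an NC-T2. -/
open Finset SimpleGraph
open scoped Classical

noncomputable section

variable {V : Type*}

namespace Grid
open Fin.NatCast
noncomputable instance (priority := 2000) decEqV (m' n' : ℕ) :
    DecidableEq (Fin (m'+2) × Fin (n'+3)) :=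
  fun a b => Classical.propDecidable _
variable (m' n' : ℕ)

lemma cast_addN (a : ℕ) : ((a + (n'+3) : ℕ) : Fin (n'+3)) = (a : Fin (n'+3)) := by
  rw [Nat.cast_add, Fin.natCast_self, add_zero]

lemma cast_ne {a b : ℕ} (h1 : a < b) (h2 : b - a < n'+3) :
    (a : Fin (n'+3)) ≠ (b : Fin (n'+3)) := by
  intro h
  have h3 : a % (n'+3) = b % (n'+3) := by
    have := congrArg Fin.val h
    simpa using this
  have h4 : (n'+3) ∣ b - a := (Nat.modEq_iff_dvd' h1.le).mp h3
  have h5 := Nat.le_of_dvd (by omega) h4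
  omega

lemma cast_succ (a : ℕ) : ((a + 1 : ℕ) : Fin (n'+3)) = (a : Fin (n'+3)) + 1 := by
  push_cast; ring

lemma succ_iff (y : Fin (n'+3)) (c : ℕ) :
    y + 1 = ((c + 1 : ℕ) : Fin (n'+3)) ↔ y = (c : Fin (n'+3)) := by
  rw [cast_succ]
  exact ⟨fun h => add_right_cancel h, fun h => by rw [h]⟩

lemma mem_nbr_iff (x : Fin (m'+2) × Fin (n'+3)) (a : Fin (m'+2)) (b : Fin (n'+3)) :
    x ∈ nbr (pathGraph (m'+2) □ cycleGraph (n'+3)) (a, b) ↔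
      ((x.1.val + 1 = a.val ∨ x.1.val = a.val + 1) ∧ x.2 = b) ∨
      (x.1 = a ∧ (x.2 + 1 = b ∨ x.2 = b + 1)) := by
  rw [nbr, mem_neighborFinset, boxProd_adj, pathGraph_adj,
    show (cycleGraph (n'+3)) = cycleGraph ((n'+1)+2) from rfl, cycleGraph_adj]
  dsimp only
  constructor
  · rintro (⟨h | h, h2⟩ | ⟨h | h, h2⟩)
    · exact Or.inl ⟨Or.inr h.symm, h2.symm⟩
    · exact Or.inl ⟨Or.inl h, h2.symm⟩
    · refine Or.inr ⟨h2.symm, Or.inl ?_⟩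
      rw [sub_eq_iff_eq_add] at h
      rw [h]; exact add_comm _ _
    · refine Or.inr ⟨h2.symm, Or.inr ?_⟩
      rw [sub_eq_iff_eq_add] at h
      rw [h]; exact add_comm _ _
  · rintro (⟨h | h, h2⟩ | ⟨h2, h | h⟩)
    · exact Or.inl ⟨Or.inr h, h2.symm⟩
    · exact Or.inl ⟨Or.inl h.symm, h2.symm⟩
    · refine Or.inr ⟨?_, h2.symm⟩
      left
      rw [sub_eq_iff_eq_add, ← h]; exact add_comm _ _
    · refine Or.inr ⟨?_, h2.symm⟩
      right
      rw [sub_eq_iff_eq_add, h]; exact add_comm _ _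

def row (i : ℕ) : Fin (m'+2) := ⟨min i (m'+1), by omega⟩

def D (sn : ℕ) (i : ℕ) : Fin (m'+2) × Fin (n'+3) := (row m' i, ((i + sn : ℕ) : Fin (n'+3)))

abbrev GG : SimpleGraph (Fin (m'+2) × Fin (n'+3)) :=
  SimpleGraph.pathGraph (m'+2) □ SimpleGraph.cycleGraph (n'+3)

lemma row_val (i : ℕ) : (row m' i).val = min i (m'+1) := rfl

lemma col_clash {c1 c2 : ℕ} {y : Fin (n'+3)} (h1 : y = (c1 : Fin (n'+3)))
    (h2 : y = (c2 : Fin (n'+3))) (hne : c1 < c2) (hd : c2 - c1 < n'+3) : False :=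
  cast_ne n' hne hd (h1.symm.trans h2)

lemma cast_congr {a b : ℕ} (h : a = b) : (a : Fin (n'+3)) = b := by rw [h]

lemma cast_shift {a b : ℕ} (h : b = a + (n'+3)) : (b : Fin (n'+3)) = a := by
  rw [h, cast_addN]

lemma memD (sn : ℕ) (x : Fin (m'+2) × Fin (n'+3)) (i : ℕ) :
    x ∈ nbr (GG m' n') (D m' n' sn i) ↔
      ((x.1.val + 1 = min i (m'+1) ∨ x.1.val = min i (m'+1) + 1)
          ∧ x.2 = ((i+sn : ℕ) : Fin (n'+3))) ∨
      (x.1 = row m' i ∧ (x.2 = ((i+sn+(n'+2) : ℕ) : Fin (n'+3))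
          ∨ x.2 = ((i+sn+1 : ℕ) : Fin (n'+3)))) := by
  rw [show D m' n' sn i = (row m' i, ((i+sn : ℕ) : Fin (n'+3))) from rfl, mem_nbr_iff,
    row_val]
  refine or_congr Iff.rfl (and_congr_right fun _ => or_congr ?_ ?_)
  · rw [show ((i+sn:ℕ) : Fin (n'+3)) = ((i+sn+(n'+2)+1 : ℕ) : Fin (n'+3)) from
      (cast_shift n' (by omega)).symm]
    exact succ_iff n' x.2 _
  · rw [show ((i+sn+1:ℕ):Fin (n'+3)) = ((i+sn : ℕ) : Fin (n'+3)) + 1 from cast_succ n' (i+sn)]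

lemma row_eq_iff {x : Fin (m'+2)} {j : ℕ} : x = row m' j ↔ x.val = min j (m'+1) := by
  rw [Fin.ext_iff, row_val]

lemma adj_of_mem_nbr {u x : Fin (m'+2) × Fin (n'+3)}
    (h : x ∈ nbr (GG m' n') u) : (GG m' n').Adj u x := by
  rw [nbr, SimpleGraph.mem_neighborFinset] at h
  exact h

lemma D_inj (sn : ℕ) {i j : ℕ} (hi : i < m'+2) (hj : j < m'+2)
    (h : D m' n' sn i = D m' n' sn j) : i = j := by
  have h1 := congrArg (fun z => (Prod.fst z).val) h
  simp only [D, row_val] at h1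
  omega

lemma D_nonadj (sn : ℕ) {i j : ℕ} (hi : i < m'+2) (hj : j < m'+2) :
    ¬ (GG m' n').Adj (D m' n' sn i) (D m' n' sn j) := by
  intro h
  rw [SimpleGraph.boxProd_adj] at h
  rcases h with ⟨hp, hc⟩ | ⟨hc, hp⟩
  · rw [SimpleGraph.pathGraph_adj] at hp
    simp only [D, row_val] at hp hc
    rcases hp with hp | hp
    · exact cast_ne n' (by omega) (by omega) hc
    · exact cast_ne n' (by omega) (by omega) hc.symm
  · have hij : i = j := by
      have := congrArg Fin.val hp
      simp only [D, row_val] at this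
      omega
    subst hij
    exact (SimpleGraph.cycleGraph (n'+3)).loopless.irrefl _ hc

lemma D_consec (sn : ℕ) {i : ℕ} (hi : i + 1 < m'+2) :
    ((nbr (GG m' n') (D m' n' sn i)) ∩ (nbr (GG m' n') (D m' n' sn (i+1)))).Nonempty := by
  refine ⟨(row m' i, ((i+sn+1 : ℕ) : Fin (n'+3))), ?_⟩
  rw [Finset.mem_inter, memD, memD]
  constructor
  · exact Or.inr ⟨rfl, Or.inr rfl⟩
  · refine Or.inl ⟨Or.inl ?_, cast_congr n' (by omega)⟩
    rw [row_val]; omega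

lemma D_nonconsec (sn : ℕ) {i j : ℕ} (hj : j < m'+2) (hij : i + 1 < j) :
    nbr (GG m' n') (D m' n' sn i) ∩ nbr (GG m' n') (D m' n' sn j) = ∅ := by
  rw [Finset.eq_empty_iff_forall_notMem]
  intro x hx
  rw [Finset.mem_inter, memD, memD] at hx
  obtain ⟨h1, h2⟩ := hx
  have hmini : min i (m'+1) = i := by omega
  have hminj : min j (m'+1) = j := by omega
  rw [hmini] at h1
  rw [hminj] at h2
  rcases h1 with ⟨hr1, hc1⟩ | ⟨hr1, hc1⟩ <;> rcases h2 with ⟨hr2, hc2⟩ | ⟨hr2, hc2⟩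
  · have hj2 : j = i + 2 := by omega
    subst hj2
    exact col_clash n' hc1 hc2 (by omega) (by omega)
  · rw [row_eq_iff] at hr2
    omega
  · rw [row_eq_iff] at hr1
    omega
  · rw [row_eq_iff] at hr1 hr2
    omega

lemma D_first (sn : ℕ) :
    nbr (GG m' n') (D m' n' sn 0) \ nbr (GG m' n') (D m' n' sn 1)
      = {(row m' 0, ((0+sn+(n'+2) : ℕ) : Fin (n'+3)))} := by
  ext x
  rw [Finset.mem_sdiff, Finset.mem_singleton, memD, memD]
  have h0 : min 0 (m'+1) = 0 := by omega
  have h1 : min 1 (m'+1) = 1 := by omega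
  rw [h0, h1]
  constructor
  · rintro ⟨⟨hr, hc⟩ | ⟨hr, hc | hc⟩, h2⟩
    · exfalso
      refine h2 (Or.inr ⟨?_, Or.inl ?_⟩)
      · rw [row_eq_iff]; omega
      · rw [hc]; exact (cast_shift n' (by omega)).symm
    · rw [Prod.ext_iff]; exact ⟨hr, hc⟩
    · exfalso
      rw [row_eq_iff] at hr
      refine h2 (Or.inl ⟨Or.inl (by omega), ?_⟩)
      rw [hc]; exact cast_congr n' (by omega)
  · rintro h
    rw [Prod.ext_iff] at h
    obtain ⟨hr, hc⟩ := h
    rw [row_eq_iff] at hr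
    refine ⟨Or.inr ⟨by rw [row_eq_iff]; omega, Or.inl hc⟩, ?_⟩
    rintro (⟨hrow, hcol⟩ | ⟨hrow, hcol | hcol⟩)
    · exact col_clash n' hcol hc (by omega) (by omega)
    · rw [row_eq_iff] at hrow; omega
    · rw [row_eq_iff] at hrow; omega

lemma D_last (sn : ℕ) :
    nbr (GG m' n') (D m' n' sn (m'+1)) \ nbr (GG m' n') (D m' n' sn m')
      = {(row m' (m'+1), (((m'+1)+sn+1 : ℕ) : Fin (n'+3)))} := by
  ext x
  rw [Finset.mem_sdiff, Finset.mem_singleton, memD, memD]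
  have h0 : min (m'+1) (m'+1) = m'+1 := by omega
  have h1 : min m' (m'+1) = m' := by omega
  rw [h0, h1]
  constructor
  · rintro ⟨⟨hr, hc⟩ | ⟨hr, hc | hc⟩, h2⟩
    · exfalso
      have hv : x.1.val = m' := by
        rcases hr with hr | hr
        · omega
        · exact absurd x.1.isLt (by omega)
      refine h2 (Or.inr ⟨?_, Or.inr ?_⟩)
      · rw [row_eq_iff]; omega
      · rw [hc]; exact cast_congr n' (by omega)
    · exfalso
      rw [row_eq_iff] at hr
      refine h2 (Or.inl ⟨Or.inr (by omega), ?_⟩)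
      rw [hc]; exact cast_shift n' (by omega)
    · rw [Prod.ext_iff]; exact ⟨hr, hc⟩
  · rintro h
    rw [Prod.ext_iff] at h
    obtain ⟨hr, hc⟩ := h
    rw [row_eq_iff] at hr
    refine ⟨Or.inr ⟨by rw [row_eq_iff]; omega, Or.inr hc⟩, ?_⟩
    rintro (⟨hrow, hcol⟩ | ⟨hrow, hcol | hcol⟩)
    · rcases hrow with hrow | hrow
      · omega
      · exact col_clash n' hcol hc (by omega) (by omega)
    · rw [row_eq_iff] at hrow; omega
    · rw [row_eq_iff] at hrow; omega

lemma D_succ_sdiff (sn : ℕ) {i : ℕ} (hi : i + 2 < m'+2) :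
    nbr (GG m' n') (D m' n' sn (i+1)) \ nbr (GG m' n') (D m' n' sn i)
      ⊆ nbr (GG m' n') (D m' n' sn (i+2)) := by
  intro x hx
  rw [Finset.mem_sdiff, memD, memD] at hx
  rw [memD]
  obtain ⟨h1, h2⟩ := hx
  have ha : min i (m'+1) = i := by omega
  have hb : min (i+1) (m'+1) = i+1 := by omega
  have hcmin : min (i+2) (m'+1) = i+2 := by omega
  rw [hb] at h1
  rw [ha] at h2
  rw [hcmin]
  rcases h1 with ⟨hr, hc⟩ | ⟨hr, hc | hc⟩
  · rcases hr with hr | hr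
    · -- x.1.val = i : x ∈ nbr (D i), contradiction
      exfalso
      refine h2 (Or.inr ⟨by rw [row_eq_iff]; omega, Or.inr ?_⟩)
      rw [hc]; exact cast_congr n' (by omega)
    · -- x.1.val = i+2
      refine Or.inr ⟨by rw [row_eq_iff]; omega, Or.inl ?_⟩
      rw [hc]; exact (cast_shift n' (by omega)).symm
  · -- x.2 = col(i+1) - 1 = col i : x ∈ nbr(D i) contradiction
    exfalso
    rw [row_eq_iff] at hr
    refine h2 (Or.inl ⟨Or.inr (by omega), ?_⟩)
    rw [hc]; exact cast_shift n' (by omega)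
  · -- x.2 = col(i+2)
    refine Or.inl ⟨Or.inl (by rw [row_eq_iff] at hr; omega), ?_⟩
    rw [hc]; exact cast_congr n' (by omega)

lemma D_sdiff_ne (sn : ℕ) {i : ℕ} (hi : i + 1 < m'+2) :
    (nbr (GG m' n') (D m' n' sn i) \ nbr (GG m' n') (D m' n' sn (i+1))).Nonempty ∧
      (nbr (GG m' n') (D m' n' sn (i+1)) \ nbr (GG m' n') (D m' n' sn i)).Nonempty := by
  have ha : min i (m'+1) = i := by omega
  have hb : min (i+1) (m'+1) = i+1 := by omega
  constructor
  · refine ⟨(row m' i, ((i+sn+(n'+2) : ℕ) : Fin (n'+3))), ?_⟩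
    rw [Finset.mem_sdiff, memD, memD]
    refine ⟨Or.inr ⟨rfl, Or.inl rfl⟩, ?_⟩
    rintro (⟨hrow, hcol⟩ | ⟨hrow, hcol | hcol⟩)
    · exact col_clash n' hcol rfl (by omega) (by omega)
    · have := congrArg Fin.val hrow
      rw [row_val, row_val] at this; omega
    · have := congrArg Fin.val hrow
      rw [row_val, row_val] at this; omega
  · refine ⟨(row m' (i+1), ((i+1+sn+1 : ℕ) : Fin (n'+3))), ?_⟩
    rw [Finset.mem_sdiff, memD, memD]
    refine ⟨Or.inr ⟨rfl, Or.inr rfl⟩, ?_⟩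
    rintro (⟨hrow, hcol⟩ | ⟨hrow, hcol | hcol⟩)
    · exact col_clash n' hcol rfl (by omega) (by omega)
    · have := congrArg Fin.val hrow
      rw [row_val, row_val] at this; omega
    · have := congrArg Fin.val hrow
      rw [row_val, row_val] at this; omega

end Grid

namespace Grid
open Fin.NatCast

variable (m' n' : ℕ)

def Tset (sn : ℕ) : Finset (Fin (m'+2) × Fin (n'+3)) :=
  (Finset.range (m'+2)).image (D m' n' sn)

def Sset (sn : ℕ) : Finset (Fin (m'+2) × Fin (n'+3)) := Finset.univ \ Tset m' n' sn

lemma mem_Sset {sn : ℕ} {x : Fin (m'+2) × Fin (n'+3)} :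
    x ∈ Sset m' n' sn ↔ ∀ i, i < m'+2 → x ≠ D m' n' sn i := by
  rw [Sset, Finset.mem_sdiff]
  simp only [Finset.mem_univ, true_and, Tset, Finset.mem_image, Finset.mem_range,
    not_exists, not_and]
  constructor
  · intro h i hi hx
    exact h i hi hx.symm
  · intro h i hi hx
    exact h i hi hx.symm

lemma card_Sset (sn : ℕ) : (Sset m' n' sn).card = (m'+2)*(n'+3) - (m'+2) := by
  have h1 : Fintype.card (Fin (m'+2) × Fin (n'+3)) = (m'+2)*(n'+3) := by simp
  have h2 : (Tset m' n' sn).card = m'+2 := by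
    rw [Tset, Finset.card_image_of_injOn, Finset.card_range]
    intro i hi j hj h
    rw [Finset.mem_coe, Finset.mem_range] at hi hj
    exact D_inj m' n' sn hi hj h
  rw [Sset, Finset.card_sdiff_of_subset (Finset.subset_univ _), Finset.card_univ, h1, h2]

lemma card_S_ge (sn : ℕ) : (m'+2)+1 ≤ (Sset m' n' sn).card := by
  rw [card_Sset]
  have : (m'+2)*3 ≤ (m'+2)*(n'+3) := Nat.mul_le_mul_left _ (by omega)
  omega

def pP (sn : ℕ) : Fin (m'+2) × Fin (n'+3) :=
  (row m' 0, ((0+sn+(n'+2) : ℕ) : Fin (n'+3)))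

def qQ (sn : ℕ) : Fin (m'+2) × Fin (n'+3) :=
  (row m' (m'+1), (((m'+1)+sn+1 : ℕ) : Fin (n'+3)))

lemma pP_mem (sn : ℕ) : pP m' n' sn ∈ Sset m' n' sn := by
  rw [mem_Sset]
  intro i hi h
  have hf := congrArg (fun z => (Prod.fst z).val) h
  have hs := congrArg Prod.snd h
  simp only [pP, D, row_val] at hf hs
  have hi0 : i = 0 := by omega
  subst hi0
  exact cast_ne n' (by omega) (by omega) hs.symm

lemma qQ_mem (sn : ℕ) : qQ m' n' sn ∈ Sset m' n' sn := by
  rw [mem_Sset]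
  intro i hi h
  have hf := congrArg (fun z => (Prod.fst z).val) h
  have hs := congrArg Prod.snd h
  simp only [qQ, D, row_val] at hf hs
  have hi0 : i = m'+1 := by omega
  subst hi0
  exact cast_ne n' (by omega) (by omega) hs.symm

noncomputable def eS (sn : ℕ) : {x // x ∈ Sset m' n' sn} ≃ Fin (Sset m' n' sn).card :=
  (Sset m' n' sn).equivFin

noncomputable def zidx (sn : ℕ) : Fin (Sset m' n' sn).card :=
  ⟨0, by have := card_S_ge m' n' sn; omega⟩

noncomputable def lidx (sn : ℕ) : Fin (Sset m' n' sn).card :=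
  ⟨m'+1, by have := card_S_ge m' n' sn; omega⟩

noncomputable def pidx (sn : ℕ) : Fin (Sset m' n' sn).card :=
  eS m' n' sn ⟨pP m' n' sn, pP_mem m' n' sn⟩

noncomputable def qidx (sn : ℕ) : Fin (Sset m' n' sn).card :=
  eS m' n' sn ⟨qQ m' n' sn, qQ_mem m' n' sn⟩

lemma pq_ne (sn : ℕ) : pidx m' n' sn ≠ qidx m' n' sn := by
  intro h
  have h2 := (eS m' n' sn).injective h
  have h3 := congrArg (fun z => (Prod.fst z.val).val) h2
  simp only [pP, qQ, row_val] at h3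
  omega

lemma zl_ne (sn : ℕ) : zidx m' n' sn ≠ lidx m' n' sn := by
  intro h
  have := congrArg Fin.val h
  simp only [zidx, lidx] at this
  omega

noncomputable def sig (sn : ℕ) : Equiv.Perm (Fin (Sset m' n' sn).card) :=
  (Equiv.swap (zidx m' n' sn) (pidx m' n' sn)).trans
    (Equiv.swap ((Equiv.swap (zidx m' n' sn) (pidx m' n' sn)) (lidx m' n' sn)) (qidx m' n' sn))

lemma sig_z (sn : ℕ) : sig m' n' sn (zidx m' n' sn) = pidx m' n' sn := by
  rw [sig, Equiv.trans_apply, Equiv.swap_apply_left]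
  apply Equiv.swap_apply_of_ne_of_ne
  · intro h
    have h2 : (Equiv.swap (zidx m' n' sn) (pidx m' n' sn)) (zidx m' n' sn)
        = (Equiv.swap (zidx m' n' sn) (pidx m' n' sn)) (lidx m' n' sn) := by
      rw [Equiv.swap_apply_left]; exact h
    exact zl_ne m' n' sn ((Equiv.swap _ _).injective h2)
  · exact pq_ne m' n' sn

lemma sig_l (sn : ℕ) : sig m' n' sn (lidx m' n' sn) = qidx m' n' sn := by
  rw [sig, Equiv.trans_apply, Equiv.swap_apply_left]

noncomputable def vF (sn : ℕ) : ℕ → Fin (m'+2) × Fin (n'+3) := fun j =>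
  if h : j < (Sset m' n' sn).card then ((eS m' n' sn).symm (sig m' n' sn ⟨j, h⟩) : _)
  else pP m' n' sn

lemma vF_lt (sn : ℕ) {j : ℕ} (h : j < (Sset m' n' sn).card) :
    vF m' n' sn j = ((eS m' n' sn).symm (sig m' n' sn ⟨j, h⟩)).val := dif_pos h

lemma vF_mem (sn : ℕ) {j : ℕ} (h : j < (Sset m' n' sn).card) :
    vF m' n' sn j ∈ Sset m' n' sn := by
  rw [vF_lt m' n' sn h]
  exact ((eS m' n' sn).symm _).2

lemma vF_inj (sn : ℕ) {i j : ℕ} (hi : i < (Sset m' n' sn).card)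
    (hj : j < (Sset m' n' sn).card) (h : vF m' n' sn i = vF m' n' sn j) : i = j := by
  rw [vF_lt m' n' sn hi, vF_lt m' n' sn hj] at h
  have h2 := (sig m' n' sn).injective ((eS m' n' sn).symm.injective (Subtype.ext h))
  have := congrArg Fin.val h2
  simpa using this

lemma vF_surj (sn : ℕ) {x : Fin (m'+2) × Fin (n'+3)} (hx : x ∈ Sset m' n' sn) :
    ∃ j, j < (Sset m' n' sn).card ∧ x = vF m' n' sn j := by
  refine ⟨((sig m' n' sn).symm (eS m' n' sn ⟨x, hx⟩)).val,
    ((sig m' n' sn).symm (eS m' n' sn ⟨x, hx⟩)).isLt, ?_⟩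
  rw [vF_lt m' n' sn ((sig m' n' sn).symm (eS m' n' sn ⟨x, hx⟩)).isLt]
  simp

lemma vF_zero (sn : ℕ) : vF m' n' sn 0 = pP m' n' sn := by
  have h0 : (0 : ℕ) < (Sset m' n' sn).card := by have := card_S_ge m' n' sn; omega
  rw [vF_lt m' n' sn h0]
  have : (⟨0, h0⟩ : Fin (Sset m' n' sn).card) = zidx m' n' sn := rfl
  rw [this, sig_z, pidx, Equiv.symm_apply_apply]

lemma vF_last (sn : ℕ) : vF m' n' sn (m'+1) = qQ m' n' sn := by
  have h0 : (m'+1 : ℕ) < (Sset m' n' sn).card := by have := card_S_ge m' n' sn; omega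
  rw [vF_lt m' n' sn h0]
  have : (⟨m'+1, h0⟩ : Fin (Sset m' n' sn).card) = lidx m' n' sn := rfl
  rw [this, sig_l, qidx, Equiv.symm_apply_apply]

set_option maxHeartbeats 1000000 in
noncomputable def mkNCT1 (sn : ℕ) : NCT1 (GG m' n') (m'+2) where
  hk := by omega
  u := D m' n' sn
  inj := fun i j hi hj h => D_inj m' n' sn hi hj h
  consec := fun i hi => D_consec m' n' sn hi
  nonconsec := fun i j hj hij _ => D_nonconsec m' n' sn hj hij
  m := (Sset m' n' sn).card
  hm := card_S_ge m' n' sn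
  v := vF m' n' sn
  vinj := fun i j hi hj h => vF_inj m' n' sn hi hj h
  disj_uv := fun i j hi hj h => ((mem_Sset m' n').mp (vF_mem m' n' sn hj) i hi) h.symm
  nonadj := fun i j hi hj => D_nonadj m' n' sn hi hj
  nbh_sub := fun i hi x hx => by
    apply vF_surj
    rw [mem_Sset]
    intro j hj hxD
    subst hxD
    exact D_nonadj m' n' sn hi hj (adj_of_mem_nbr m' n' hx)
  nbh_nonempty := fun i hi =>
    ⟨(row m' i, ((i+sn+1 : ℕ) : Fin (n'+3))), by
      rw [memD]; exact Or.inr ⟨rfl, Or.inr rfl⟩⟩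
  first := by
    rw [vF_zero]
    exact D_first m' n' sn
  last := by
    show nbr (GG m' n') (D m' n' sn (m'+1)) \ nbr (GG m' n') (D m' n' sn m')
      = {vF m' n' sn (m'+1)}
    rw [vF_last]
    exact D_last m' n' sn
  succ_sdiff_sub := fun i hi => D_succ_sdiff m' n' sn hi
  sdiff_nonempty := fun i hi => D_sdiff_ne m' n' sn hi

lemma cond1_left_eq :
    nbr (GG m' n') (D m' n' 0 0) ∩ nbr (GG m' n') (D m' n' 0 1) ∩ nbr (GG m' n') (D m' n' 2 0)
      = nbr (GG m' n') (D m' n' 2 0) \ nbr (GG m' n') (D m' n' 2 1) := by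
  rw [D_first m' n' 2]
  ext x
  rw [Finset.mem_inter, Finset.mem_inter, Finset.mem_singleton, memD, memD, memD]
  have hm0 : min 0 (m'+1) = 0 := by omega
  have hm1 : min 1 (m'+1) = 1 := by omega
  rw [hm0, hm1]
  constructor
  · rintro ⟨⟨h1, h2⟩, h3⟩
    rcases h1 with ⟨hr1, hc1⟩ | ⟨hrow1, hc1 | hc1⟩
    · exfalso
      rcases h3 with ⟨_, hc3⟩ | ⟨hrow3, _⟩
      · exact col_clash n' hc1 hc3 (by omega) (by omega)
      · rw [row_eq_iff] at hrow3; omega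
    · exfalso
      rcases h2 with ⟨_, hc2⟩ | ⟨hrow2, _⟩
      · exact col_clash n' hc2 hc1 (by omega) (by omega)
      · rw [row_eq_iff] at hrow1 hrow2; omega
    · rw [Prod.ext_iff]
      refine ⟨hrow1, ?_⟩
      rw [hc1]
      exact (cast_shift n' (by omega)).symm
  · rintro h
    rw [Prod.ext_iff] at h
    obtain ⟨hr, hc⟩ := h
    refine ⟨⟨?_, ?_⟩, ?_⟩
    · refine Or.inr ⟨hr, Or.inr ?_⟩
      rw [hc]
      exact cast_shift n' (by omega)
    · refine Or.inl ⟨Or.inl ?_, ?_⟩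
      · rw [row_eq_iff] at hr; omega
      · rw [hc]
        exact cast_shift n' (by omega)
    · exact Or.inr ⟨hr, Or.inl hc⟩

lemma cond1_left_ne :
    (nbr (GG m' n') (D m' n' 2 0) \ nbr (GG m' n') (D m' n' 2 1)).Nonempty := by
  rw [D_first m' n' 2]
  exact Finset.singleton_nonempty _

lemma cond1_right_eq :
    nbr (GG m' n') (D m' n' 0 (m'+1)) ∩ nbr (GG m' n') (D m' n' 2 (m'+1))
        ∩ nbr (GG m' n') (D m' n' 2 m')
      = nbr (GG m' n') (D m' n' 0 (m'+1)) \ nbr (GG m' n') (D m' n' 0 m') := by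
  rw [D_last m' n' 0]
  ext x
  rw [Finset.mem_inter, Finset.mem_inter, Finset.mem_singleton, memD, memD, memD]
  have hm0 : min (m'+1) (m'+1) = m'+1 := by omega
  have hm1 : min m' (m'+1) = m' := by omega
  rw [hm0, hm1]
  constructor
  · rintro ⟨⟨h1, h2⟩, h3⟩
    rcases h1 with ⟨hr1, hc1⟩ | ⟨hrow1, hc1 | hc1⟩
    · exfalso
      rcases h2 with ⟨_, hc2⟩ | ⟨hrow2, _⟩
      · exact col_clash n' hc1 hc2 (by omega) (by omega)
      · rw [row_eq_iff] at hrow2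
        have := x.1.isLt
        omega
    · exfalso
      rcases h3 with ⟨_, hc3⟩ | ⟨hrow3, _⟩
      · exact col_clash n' hc3 hc1 (by omega) (by omega)
      · rw [row_eq_iff] at hrow1 hrow3; omega
    · rw [Prod.ext_iff]
      exact ⟨hrow1, hc1⟩
  · rintro h
    rw [Prod.ext_iff] at h
    obtain ⟨hr, hc⟩ := h
    refine ⟨⟨?_, ?_⟩, ?_⟩
    · exact Or.inr ⟨hr, Or.inr hc⟩
    · refine Or.inr ⟨hr, Or.inl ?_⟩
      rw [hc]
      exact (cast_shift n' (by omega)).symm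
    · refine Or.inl ⟨Or.inr ?_, ?_⟩
      · rw [row_eq_iff] at hr; omega
      · exact hc.trans (cast_congr n' (by omega))

lemma cond1_right_ne :
    (nbr (GG m' n') (D m' n' 0 (m'+1)) \ nbr (GG m' n') (D m' n' 0 m')).Nonempty := by
  rw [D_last m' n' 0]
  exact Finset.singleton_nonempty _

lemma cond2_aux (i : ℕ) (h1i : 1 ≤ i) (hi : i + 1 < m'+2) :
    (nbr (GG m' n') (D m' n' 0 i) ∩ nbr (GG m' n') (D m' n' 0 (i+1))
        ∩ nbr (GG m' n') (D m' n' 2 i) ∩ nbr (GG m' n') (D m' n' 2 (i-1))).Nonempty := by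
  refine ⟨(row m' i, ((i+0+1 : ℕ) : Fin (n'+3))), ?_⟩
  rw [Finset.mem_inter, Finset.mem_inter, Finset.mem_inter, memD, memD, memD, memD]
  refine ⟨⟨⟨?_, ?_⟩, ?_⟩, ?_⟩
  · exact Or.inr ⟨rfl, Or.inr rfl⟩
  · refine Or.inl ⟨Or.inl ?_, ?_⟩
    · rw [row_val]; omega
    · exact cast_congr n' (by omega)
  · refine Or.inr ⟨rfl, Or.inl ?_⟩
    exact (cast_shift n' (by omega)).symm
  · refine Or.inl ⟨Or.inr ?_, ?_⟩
    · rw [row_val]; omega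
    · exact cast_congr n' (by omega)

end Grid


set_option maxHeartbeats 1000000 in
/-- For `m ≥ 2`, `n ≥ 3`, the cylindrical grid graph `P_m □ C_n`
contains a Type-2 pair of neighbourhood chains (two NC-T1 of equal length). -/
theorem grid_contains_nct2 (m n : ℕ) (hm : 2 ≤ m) (hn : 3 ≤ n) :
    ∃ k : ℕ, Nonempty (NCT2 (SimpleGraph.pathGraph m □ SimpleGraph.cycleGraph n) k) := by
  obtain ⟨m', rfl⟩ : ∃ k, m = k+2 := ⟨m-2, by omega⟩
  obtain ⟨n', rfl⟩ : ∃ k, n = k+3 := ⟨n-3, by omega⟩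
  refine ⟨m'+2, ⟨⟨Grid.mkNCT1 m' n' 0, Grid.mkNCT1 m' n' 2, ?_, ?_, ?_, ?_, ?_⟩⟩⟩
  · exact Grid.cond1_left_eq m' n'
  · exact Grid.cond1_left_ne m' n'
  · exact Grid.cond1_right_eq m' n'
  · exact Grid.cond1_right_ne m' n'
  · intro i h1 h2
    exact Grid.cond2_aux m' n' i h1 h2
end
end

section
/- For every integer m ≥ 2, the graphs P_m □ C_3 and P_m □ C_4 (Cartesian products of the path on m vertices with the cycles on 3 and 4 vertices) are non-distance magic, i.e., admit no distance magic labeling. -/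
open Finset SimpleGraph
open scoped Classical

noncomputable section

variable {V : Type*}

lemma sum3 {α : Type*} [DecidableEq α] (F : α → ℕ) (x y z : α) (hxy : x ≠ y) (hxz : x ≠ z) (hyz : y ≠ z) :
    ∑ v ∈ ({x, y, z} : Finset α), F v = F x + F y + F z := by
  rw [Finset.sum_insert (by simp [hxy, hxz]), Finset.sum_insert (by simp [hyz]),
    Finset.sum_singleton, add_assoc]

lemma sum4 {α : Type*} [DecidableEq α] (F : α → ℕ) (x y z w : α) (hxy : x ≠ y) (hxz : x ≠ z) (hxw : x ≠ w)
    (hyz : y ≠ z) (hyw : y ≠ w) (hzw : z ≠ w) :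
    ∑ v ∈ ({x, y, z, w} : Finset α), F v = F x + F y + F z + F w := by
  rw [Finset.sum_insert (by simp [hxy, hxz, hxw]), Finset.sum_insert (by simp [hyz, hyw]),
    Finset.sum_insert (by simp [hzw]), Finset.sum_singleton]
  ring

lemma nbr3_row0 (m : ℕ) (hm : 2 ≤ m) (j : Fin 3) :
    nbr (SimpleGraph.pathGraph m □ SimpleGraph.cycleGraph 3) (⟨0, by omega⟩, j) =
      {(⟨0, by omega⟩, j+1), (⟨0, by omega⟩, j+2), (⟨1, by omega⟩, j)} := by
  ext ⟨a, b⟩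
  simp only [nbr, SimpleGraph.mem_neighborFinset, SimpleGraph.boxProd_adj, pathGraph_adj,
    cycleGraph_adj', Finset.mem_insert, Finset.mem_singleton, Prod.ext_iff, Fin.ext_iff]
  fin_cases j <;> fin_cases b <;>
    simp [show ((-2 : Fin 3) : ℕ) = 1 from rfl, show ((-1 : Fin 3) : ℕ) = 2 from rfl] <;> omega

lemma nbr3_row1 (m : ℕ) (hm : 3 ≤ m) (j : Fin 3) :
    nbr (SimpleGraph.pathGraph m □ SimpleGraph.cycleGraph 3) (⟨1, by omega⟩, j) =
      {(⟨1, by omega⟩, j+1), (⟨1, by omega⟩, j+2), (⟨0, by omega⟩, j), (⟨2, by omega⟩, j)} := by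
  ext ⟨a, b⟩
  simp only [nbr, SimpleGraph.mem_neighborFinset, SimpleGraph.boxProd_adj, pathGraph_adj,
    cycleGraph_adj', Finset.mem_insert, Finset.mem_singleton, Prod.ext_iff, Fin.ext_iff]
  fin_cases j <;> fin_cases b <;>
    simp [show ((-2 : Fin 3) : ℕ) = 1 from rfl, show ((-1 : Fin 3) : ℕ) = 2 from rfl] <;> omega

lemma nbr3_row1' (j : Fin 3) :
    nbr (SimpleGraph.pathGraph 2 □ SimpleGraph.cycleGraph 3) (⟨1, by omega⟩, j) =
      {(⟨1, by omega⟩, j+1), (⟨1, by omega⟩, j+2), (⟨0, by omega⟩, j)} := by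
  ext ⟨a, b⟩
  simp only [nbr, SimpleGraph.mem_neighborFinset, SimpleGraph.boxProd_adj, pathGraph_adj,
    cycleGraph_adj', Finset.mem_insert, Finset.mem_singleton, Prod.ext_iff, Fin.ext_iff]
  fin_cases j <;> fin_cases b <;>
    simp [show ((-2 : Fin 3) : ℕ) = 1 from rfl, show ((-1 : Fin 3) : ℕ) = 2 from rfl] <;> omega

lemma nbr4_row0 (m : ℕ) (hm : 2 ≤ m) (j : Fin 4) :
    nbr (SimpleGraph.pathGraph m □ SimpleGraph.cycleGraph 4) (⟨0, by omega⟩, j) =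
      {(⟨0, by omega⟩, j+1), (⟨0, by omega⟩, j+3), (⟨1, by omega⟩, j)} := by
  ext ⟨a, b⟩
  simp only [nbr, SimpleGraph.mem_neighborFinset, SimpleGraph.boxProd_adj, pathGraph_adj,
    cycleGraph_adj', Finset.mem_insert, Finset.mem_singleton, Prod.ext_iff, Fin.ext_iff]
  fin_cases j <;> fin_cases b <;>
    simp [show ((-3 : Fin 4) : ℕ) = 1 from rfl, show ((-1 : Fin 4) : ℕ) = 3 from rfl,
      show ((-2 : Fin 4) : ℕ) = 2 from rfl] <;> omega

lemma Fval_inj {V : Type*} [Fintype V] (f : V ≃ Fin (Fintype.card V)) {u v : V}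
    (h : ((f u : ℕ) + 1) = ((f v : ℕ) + 1)) : u = v :=
  f.injective (Fin.ext (by omega))

lemma magic3_row0 (m : ℕ) (hm : 2 ≤ m) (F : Fin m × Fin 3 → ℕ) (S : ℕ) (j : Fin 3)
    (h : ∑ v ∈ nbr (SimpleGraph.pathGraph m □ SimpleGraph.cycleGraph 3) (⟨0, by omega⟩, j), F v = S) :
    F (⟨0, by omega⟩, j+1) + F (⟨0, by omega⟩, j+2) + F (⟨1, by omega⟩, j) = S := by
  rw [nbr3_row0 m hm j, sum3 F (⟨0, by omega⟩, j+1) (⟨0, by omega⟩, j+2) (⟨1, by omega⟩, j)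
    (by simp only [ne_eq, Prod.mk.injEq, not_and]; intro _ h'; exact absurd (add_left_cancel h') (by decide))
    (by simp only [ne_eq, Prod.mk.injEq, Fin.mk.injEq, not_and]; omega)
    (by simp only [ne_eq, Prod.mk.injEq, Fin.mk.injEq, not_and]; omega)] at h
  exact h

lemma magic3_row1 (m : ℕ) (hm : 3 ≤ m) (F : Fin m × Fin 3 → ℕ) (S : ℕ) (j : Fin 3)
    (h : ∑ v ∈ nbr (SimpleGraph.pathGraph m □ SimpleGraph.cycleGraph 3) (⟨1, by omega⟩, j), F v = S) :
    F (⟨1, by omega⟩, j+1) + F (⟨1, by omega⟩, j+2) + F (⟨0, by omega⟩, j) + F (⟨2, by omega⟩, j) = S := by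
  rw [nbr3_row1 m hm j, sum4 F (⟨1, by omega⟩, j+1) (⟨1, by omega⟩, j+2) (⟨0, by omega⟩, j) (⟨2, by omega⟩, j)
    (by simp only [ne_eq, Prod.mk.injEq, not_and]; intro _ h'; exact absurd (add_left_cancel h') (by decide))
    (by simp only [ne_eq, Prod.mk.injEq, Fin.mk.injEq, not_and]; omega)
    (by simp only [ne_eq, Prod.mk.injEq, Fin.mk.injEq, not_and]; omega)
    (by simp only [ne_eq, Prod.mk.injEq, Fin.mk.injEq, not_and]; omega)
    (by simp only [ne_eq, Prod.mk.injEq, Fin.mk.injEq, not_and]; omega)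
    (by simp only [ne_eq, Prod.mk.injEq, Fin.mk.injEq, not_and]; omega)] at h
  exact h

lemma magic3_row1' (F : Fin 2 × Fin 3 → ℕ) (S : ℕ) (j : Fin 3)
    (h : ∑ v ∈ nbr (SimpleGraph.pathGraph 2 □ SimpleGraph.cycleGraph 3) (⟨1, by omega⟩, j), F v = S) :
    F (⟨1, by omega⟩, j+1) + F (⟨1, by omega⟩, j+2) + F (⟨0, by omega⟩, j) = S := by
  rw [nbr3_row1' j, sum3 F (⟨1, by omega⟩, j+1) (⟨1, by omega⟩, j+2) (⟨0, by omega⟩, j)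
    (by simp only [ne_eq, Prod.mk.injEq, not_and]; intro _ h'; exact absurd (add_left_cancel h') (by decide))
    (by simp only [ne_eq, Prod.mk.injEq, Fin.mk.injEq, not_and]; omega)
    (by simp only [ne_eq, Prod.mk.injEq, Fin.mk.injEq, not_and]; omega)] at h
  exact h

lemma magic4_row0 (m : ℕ) (hm : 2 ≤ m) (F : Fin m × Fin 4 → ℕ) (S : ℕ) (j : Fin 4)
    (h : ∑ v ∈ nbr (SimpleGraph.pathGraph m □ SimpleGraph.cycleGraph 4) (⟨0, by omega⟩, j), F v = S) :
    F (⟨0, by omega⟩, j+1) + F (⟨0, by omega⟩, j+3) + F (⟨1, by omega⟩, j) = S := by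
  rw [nbr4_row0 m hm j, sum3 F (⟨0, by omega⟩, j+1) (⟨0, by omega⟩, j+3) (⟨1, by omega⟩, j)
    (by simp only [ne_eq, Prod.mk.injEq, not_and]; intro _ h'; exact absurd (add_left_cancel h') (by decide))
    (by simp only [ne_eq, Prod.mk.injEq, Fin.mk.injEq, not_and]; omega)
    (by simp only [ne_eq, Prod.mk.injEq, Fin.mk.injEq, not_and]; omega)] at h
  exact h


/-- For `m ≥ 2`, the graphs `P_m □ C₃` and `P_m □ C₄` are
non-distance magic. -/
theorem grid_c3_c4_non_distance_magic (m : ℕ) (hm : 2 ≤ m) :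
    ¬ IsDistanceMagic (SimpleGraph.pathGraph m □ SimpleGraph.cycleGraph 3) ∧
      ¬ IsDistanceMagic (SimpleGraph.pathGraph m □ SimpleGraph.cycleGraph 4) := by
  constructor
  · rintro ⟨f, S, hf⟩
    set F : Fin m × Fin 3 → ℕ := fun v => (f v : ℕ) + 1 with hF
    by_cases h3 : 3 ≤ m
    · have h00 := magic3_row0 m hm F S 0 (hf _)
      have h01 := magic3_row0 m hm F S 1 (hf _)
      have h10 := magic3_row1 m h3 F S 0 (hf _)
      have h11 := magic3_row1 m h3 F S 1 (hf _)
      have key : F (⟨2, by omega⟩, (0:Fin 3)) = F (⟨2, by omega⟩, (1:Fin 3)) := by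
        simp only [show (0:Fin 3)+1 = 1 from rfl, show (0:Fin 3)+2 = 2 from rfl,
          show (1:Fin 3)+1 = 2 from rfl, show (1:Fin 3)+2 = 0 from rfl] at h00 h01 h10 h11
        omega
      have h := Fval_inj f key
      simpa using congrArg Prod.snd h
    · have hm2 : m = 2 := by omega
      subst hm2
      have h00 := magic3_row0 2 hm F S 0 (hf _)
      have h01 := magic3_row0 2 hm F S 1 (hf _)
      have h02 := magic3_row0 2 hm F S 2 (hf _)
      have h10 := magic3_row1' F S 0 (hf _)
      have key : F (⟨0, by omega⟩, (0:Fin 3)) = F (⟨1, by omega⟩, (0:Fin 3)) := by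
        simp only [show (0:Fin 3)+1 = 1 from rfl, show (0:Fin 3)+2 = 2 from rfl,
          show (1:Fin 3)+1 = 2 from rfl, show (1:Fin 3)+2 = 0 from rfl,
          show (2:Fin 3)+1 = 0 from rfl, show (2:Fin 3)+2 = 1 from rfl] at h00 h01 h02 h10
        omega
      have h := Fval_inj f key
      have h' := congrArg (fun p => (p.1 : ℕ)) h
      simp at h'
  · rintro ⟨f, S, hf⟩
    set F : Fin m × Fin 4 → ℕ := fun v => (f v : ℕ) + 1 with hF
    have h00 := magic4_row0 m hm F S 0 (hf _)
    have h02 := magic4_row0 m hm F S 2 (hf _)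
    have key : F (⟨1, by omega⟩, (0:Fin 4)) = F (⟨1, by omega⟩, (2:Fin 4)) := by
      simp only [show (0:Fin 4)+1 = 1 from rfl, show (0:Fin 4)+3 = 3 from rfl,
        show (2:Fin 4)+1 = 3 from rfl, show (2:Fin 4)+3 = 1 from rfl] at h00 h02
      omega
    have h := Fval_inj f key
    simpa using congrArg Prod.snd h
end
end

section
/- For all integers k ≥ 1 and n ≥ 3, the graph P_{2k} □ C_n (the Cartesian product of the path on 2k vertices with the cycle on n vertices) is non-distance magic, i.e., admits no distance magic labeling. -/
open Finset SimpleGraph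
open scoped Classical

noncomputable section

variable {V : Type*}

section AuxLemmas

set_option maxHeartbeats 1000000

lemma sum_nbr_box {α β : Type*} [Fintype α] [Fintype β] (G : SimpleGraph α) (H : SimpleGraph β)
    (x : α × β) (F : α × β → ℕ) :
    ∑ v ∈ nbr (G □ H) x, F v = (∑ a ∈ nbr G x.1, F (a, x.2)) + ∑ b ∈ nbr H x.2, F (x.1, b) := by
  classical
  have hset : nbr (G □ H) x
      = ((nbr G x.1).image fun a => (a, x.2)) ∪ ((nbr H x.2).image fun b => (x.1, b)) := by
    ext ⟨a, b⟩
    simp only [nbr, mem_neighborFinset, Finset.mem_union, Finset.mem_image, boxProd_adj,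
      Prod.mk.injEq]
    constructor
    · rintro (⟨h1, h2⟩ | ⟨h1, h2⟩)
      · exact Or.inl ⟨a, h1, rfl, h2⟩
      · exact Or.inr ⟨b, h1, h2, rfl⟩
    · rintro (⟨c, hc, rfl, rfl⟩ | ⟨c, hc, rfl, rfl⟩)
      · exact Or.inl ⟨hc, rfl⟩
      · exact Or.inr ⟨hc, rfl⟩
  rw [hset, Finset.sum_union, Finset.sum_image, Finset.sum_image]
  · intro a _ b _ h; simpa using congrArg Prod.snd h
  · intro a _ b _ h; simpa using congrArg Prod.fst h
  · rw [Finset.disjoint_left]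
    rintro ⟨a, b⟩ h1 h2
    simp only [Finset.mem_image, nbr, mem_neighborFinset, Prod.mk.injEq] at h1 h2
    obtain ⟨c, hc, rfl, rfl⟩ := h1
    obtain ⟨d, hd, he, rfl⟩ := h2
    exact (G.ne_of_adj hc) he

lemma path_nbr_zero (m : ℕ) (h1 : 1 < m) :
    nbr (pathGraph m) ⟨0, by omega⟩ = {⟨1, h1⟩} := by
  ext a
  have ha := a.isLt
  simp only [nbr, mem_neighborFinset, pathGraph_adj, Finset.mem_singleton, Fin.ext_iff]
  omega

lemma path_nbr_last (m i a : ℕ) (h : a + 1 = i) (hi : i + 1 = m) :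
    nbr (pathGraph m) ⟨i, by omega⟩ = {⟨a, by omega⟩} := by
  ext x
  have hx := x.isLt
  simp only [nbr, mem_neighborFinset, pathGraph_adj, Finset.mem_singleton, Fin.ext_iff]
  omega

lemma path_nbr_mid (m a i b : ℕ) (ha : a + 1 = i) (hb : i + 1 = b) (hbm : b < m) :
    nbr (pathGraph m) ⟨i, by omega⟩ = {⟨a, by omega⟩, ⟨b, hbm⟩} := by
  ext x
  have hx := x.isLt
  simp only [nbr, mem_neighborFinset, pathGraph_adj, Finset.mem_insert, Finset.mem_singleton,
    Fin.ext_iff]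
  omega

lemma cycle_nbr (n : ℕ) (j : Fin (n+2)) :
    nbr (cycleGraph (n+2)) j = {j - 1, j + 1} := by
  ext a
  rw [nbr, mem_neighborFinset, ← SimpleGraph.mem_neighborSet, cycleGraph_neighborSet]
  simp

end AuxLemmas

open Fin.CommRing

/-- For `k ≥ 1` and `n ≥ 3`, the graph `P_{2k} □ C_n` is
non-distance magic. -/
theorem grid_even_path_non_distance_magic (k n : ℕ) (hk : 1 ≤ k) (hn : 3 ≤ n) :
    ¬ IsDistanceMagic (SimpleGraph.pathGraph (2 * k) □ SimpleGraph.cycleGraph n) := by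
  obtain ⟨n', rfl⟩ : ∃ n', n = n' + 2 := ⟨n - 2, by omega⟩
  have hn' : 1 ≤ n' := by omega
  rintro ⟨f, S, hS⟩
  set F : Fin (2 * k) × Fin (n' + 2) → ℕ := fun x => (f x : ℕ) + 1 with hF
  -- the fundamental equation at each vertex, in flexible form
  have hne : ∀ j : Fin (n' + 2), j - 1 ≠ j + 1 := by
    intro j h
    have h3 : ((2 : ℕ) : Fin (n' + 2)) = 0 := by push_cast; linear_combination -h
    rw [Fin.natCast_eq_zero] at h3
    have := Nat.le_of_dvd (by norm_num) h3
    omega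
  have hsum : ∀ (i : Fin (2 * k)) (j : Fin (n' + 2)),
      (∑ a ∈ nbr (pathGraph (2 * k)) i, F (a, j)) + (F (i, j - 1) + F (i, j + 1)) = S := by
    intro i j
    have h1 := hS (i, j)
    rw [sum_nbr_box] at h1
    rw [cycle_nbr, Finset.sum_pair (hne j)] at h1
    simpa [hF] using h1
  have hsum' : ∀ (i : Fin (2 * k)) (p q r : Fin (n' + 2)), q = p + 1 → r = p + 2 →
      (∑ a ∈ nbr (pathGraph (2 * k)) i, F (a, q)) + (F (i, p) + F (i, r)) = S := by
    intro i p q r hq hr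
    subst hq hr
    have h1 := hsum i (p + 1)
    rw [show p + 1 - 1 = p from by ring, show p + 1 + 1 = p + 2 from by ring] at h1
    exact h1
  -- bridging lemma for changing representations of indices
  have congrF : ∀ (a b : ℕ) (ha : a < 2 * k) (hb : b < 2 * k) (j1 j2 : Fin (n' + 2)),
      a = b → j1 = j2 → F (⟨a, ha⟩, j1) = F (⟨b, hb⟩, j2) := by
    rintro a b ha hb j1 j2 rfl rfl; rfl

  -- expanded vertex equations, by path-row case
  have eqZero : ∀ (p q r : Fin (n' + 2)), q = p + 1 → r = p + 2 →
      F (⟨1, by omega⟩, q) + (F (⟨0, by omega⟩, p) + F (⟨0, by omega⟩, r)) = S := by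
    intro p q r hq hr
    have h1 := hsum' ⟨0, by omega⟩ p q r hq hr
    rw [path_nbr_zero (2 * k) (by omega), Finset.sum_singleton] at h1
    exact h1
  have eqLast : ∀ (a0 a : ℕ) (h0 : a0 + 1 = a) (hm : a + 1 = 2 * k)
      (p q r : Fin (n' + 2)), q = p + 1 → r = p + 2 →
      F (⟨a0, by omega⟩, q) + (F (⟨a, by omega⟩, p) + F (⟨a, by omega⟩, r)) = S := by
    intro a0 a h0 hm p q r hq hr
    have h1 := hsum' ⟨a, by omega⟩ p q r hq hr
    rw [path_nbr_last (2 * k) a a0 h0 hm, Finset.sum_singleton] at h1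
    exact h1
  have eqMid : ∀ (a0 a a1 : ℕ) (h0 : a0 + 1 = a) (h1 : a + 1 = a1) (hm : a1 < 2 * k)
      (p q r : Fin (n' + 2)), q = p + 1 → r = p + 2 →
      (F (⟨a0, by omega⟩, q) + F (⟨a1, hm⟩, q)) + (F (⟨a, by omega⟩, p) + F (⟨a, by omega⟩, r)) = S := by
    intro a0 a a1 h0 h1 hm p q r hq hr
    have h2 := hsum' ⟨a, by omega⟩ p q r hq hr
    rw [path_nbr_mid (2 * k) a0 a a1 h0 h1 hm,
      Finset.sum_pair (by simp only [ne_eq, Fin.mk.injEq]; omega)] at h2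
    exact h2
  -- middle relation
  have RelMid : ∀ (a : ℕ) (ha1 : 1 ≤ a) (ha2 : a + 3 ≤ 2 * k), ∀ j' : Fin (n' + 2),
      F (⟨a, by omega⟩, j') + F (⟨a - 1, by omega⟩, j' + 1)
        = F (⟨a + 2, by omega⟩, j' + 2) + F (⟨a + 1, by omega⟩, j' + 3) := by
    intro a ha1 ha2 j'
    have A := eqMid (a - 1) a (a + 1) (by omega) rfl (by omega) j' (j' + 1) (j' + 2) rfl rfl
    have B := eqMid a (a + 1) (a + 2) rfl rfl (by omega) (j' + 1) (j' + 2) (j' + 3) (by ring) (by ring)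
    linarith [A, B]
  have RelLast : ∀ (a : ℕ) (ha1 : 1 ≤ a) (ha2 : a + 2 = 2 * k), ∀ j' : Fin (n' + 2),
      F (⟨a, by omega⟩, j') + F (⟨a - 1, by omega⟩, j' + 1)
        = F (⟨a + 1, by omega⟩, j' + 3) := by
    intro a ha1 ha2 j'
    have A := eqMid (a - 1) a (a + 1) (by omega) rfl (by omega) j' (j' + 1) (j' + 2) rfl rfl
    have B := eqLast a (a + 1) rfl (by omega) (j' + 1) (j' + 2) (j' + 3) (by ring) (by ring)
    linarith [A, B]
  have RelFirst : ∀ hk2 : 2 ≤ k, ∀ j : Fin (n' + 2),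
      F (⟨0, by omega⟩, j) = F (⟨2, by omega⟩, j + 2) + F (⟨1, by omega⟩, j + 3) := by
    intro hk2 j
    have A := eqZero j (j + 1) (j + 2) rfl rfl
    have B := eqMid 0 1 2 rfl rfl (by omega) (j + 1) (j + 2) (j + 3) (by ring) (by ring)
    linarith [A, B]
  -- the case k = 1
  rcases Nat.lt_or_ge k 2 with hk2 | hk2
  · have hk1 : 2 * k = 2 := by omega
    have A := eqZero (0 : Fin (n' + 2)) 1 2 (by ring) (by ring)
    have B := eqLast 0 1 rfl (by omega) (1 : Fin (n' + 2)) 2 3 (by ring) (by ring)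
    have hEq : F (⟨0, by omega⟩, (0 : Fin (n' + 2))) = F (⟨1, by omega⟩, 3) := by
      linarith [A, B]
    have := f.injective (Fin.ext (by simpa [hF] using hEq))
    have h0 := congrArg (fun p => (p.1 : Fin (2 * k)).val) this
    simp at h0
  -- the case k ≥ 2
  · have Claim : ∀ t, ∀ ht : t + 2 ≤ k, ∀ j : Fin (n' + 2),
        F (⟨0, by omega⟩, j)
          = F (⟨2 * t + 2, by omega⟩, j + ((2 * t + 2 : ℕ) : Fin (n' + 2)))
            + F (⟨2 * t + 1, by omega⟩, j + ((2 * t + 3 : ℕ) : Fin (n' + 2))) := by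
      intro t
      induction t with
      | zero =>
        intro ht j
        have h1 := RelFirst hk2 j
        refine h1.trans ?_
        have e1 : j + 2 = j + ((2 * 0 + 2 : ℕ) : Fin (n' + 2)) := by push_cast; ring
        have e2 : j + 3 = j + ((2 * 0 + 3 : ℕ) : Fin (n' + 2)) := by push_cast; ring
        rw [congrF 2 (2 * 0 + 2) (by omega) (by omega) _ _ (by omega) e1,
          congrF 1 (2 * 0 + 1) (by omega) (by omega) _ _ (by omega) e2]
      | succ t ih =>
        intro ht j
        have IH := ih (by omega) j
        set j' : Fin (n' + 2) := j + ((2 * t + 2 : ℕ) : Fin (n' + 2)) with hj'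
        have R := RelMid (2 * t + 2) (by omega) (by omega) j'
        have b3 : F (⟨2 * t + 2 - 1, by omega⟩, j' + 1)
            = F (⟨2 * t + 1, by omega⟩, j + ((2 * t + 3 : ℕ) : Fin (n' + 2))) := by
          refine congrF _ _ _ _ _ _ (by omega) ?_
          rw [hj']; push_cast; ring
        have b1 : F (⟨2 * t + 2 + 2, by omega⟩, j' + 2)
            = F (⟨2 * (t + 1) + 2, by omega⟩, j + ((2 * (t + 1) + 2 : ℕ) : Fin (n' + 2))) := by
          refine congrF _ _ _ _ _ _ (by omega) ?_
          rw [hj']; push_cast; ring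
        have b2 : F (⟨2 * t + 2 + 1, by omega⟩, j' + 3)
            = F (⟨2 * (t + 1) + 1, by omega⟩, j + ((2 * (t + 1) + 3 : ℕ) : Fin (n' + 2))) := by
          refine congrF _ _ _ _ _ _ (by omega) ?_
          rw [hj']; push_cast; ring
        linarith [IH, R, b1, b2, b3]
    -- conclude
    have hC := Claim (k - 2) (by omega) (0 : Fin (n' + 2))
    set j' : Fin (n' + 2) := (0 : Fin (n' + 2)) + ((2 * (k - 2) + 2 : ℕ) : Fin (n' + 2)) with hj'
    have R := RelLast (2 * (k - 2) + 2) (by omega) (by omega) j'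
    have b3 : F (⟨2 * (k - 2) + 2 - 1, by omega⟩, j' + 1)
        = F (⟨2 * (k - 2) + 1, by omega⟩, (0 : Fin (n' + 2)) + ((2 * (k - 2) + 3 : ℕ) : Fin (n' + 2))) := by
      refine congrF _ _ _ _ _ _ (by omega) ?_
      rw [hj']; push_cast; ring
    have hEq : F (⟨0, by omega⟩, (0 : Fin (n' + 2)))
        = F (⟨2 * (k - 2) + 2 + 1, by omega⟩, j' + 3) := by
      linarith [hC, R, b3]
    have := f.injective (Fin.ext (by simpa [hF] using hEq))
    have h0 := congrArg (fun p => (p.1 : Fin (2 * k)).val) this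
    simp at h0
end
end

section
/- Let G₁ and G₂ be finite simple graphs on disjoint vertex sets such that G₁ contains a Type-3 pair of neighbourhood chains (NC-T3). Then the disjoint union G₁ ∪ G₂ is non-distance magic, i.e., admits no distance magic labeling. -/
open Finset SimpleGraph
open scoped Classical

noncomputable section

variable {V : Type*}

section Helpers

variable {W : Type*} [DecidableEq W]

/-- If two finsets have the same `g`-sum, the sums over the set differences agree. -/
lemma sdiff_sum_eq (g : W → ℕ) {A B : Finset W}
    (h : ∑ v ∈ A, g v = ∑ v ∈ B, g v) :
    ∑ v ∈ A \ B, g v = ∑ v ∈ B \ A, g v := by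
  have hA := Finset.sum_inter_add_sum_sdiff A B g
  have hB := Finset.sum_inter_add_sum_sdiff B A g
  rw [Finset.inter_comm] at hB
  omega

/-- The key local step along a neighbourhood chain. -/
lemma chain_step (g : W → ℕ) (S : ℕ) (N : ℕ → Finset W) (s : ℕ)
    (hS1 : ∑ v ∈ N s, g v = S) (hS2 : ∑ v ∈ N (s + 1), g v = S)
    (hsub : N (s + 1) \ N s ⊆ N (s + 2)) (hdisj : N s ∩ N (s + 2) = ∅) :
    (∑ v ∈ N (s + 1) \ N (s + 2), g v) + (∑ v ∈ N s \ N (s + 1), g v) = S := by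
  have heq : N (s + 1) \ N (s + 2) = N (s + 1) ∩ N s := by
    ext x
    simp only [Finset.mem_sdiff, Finset.mem_inter]
    constructor
    · rintro ⟨h1, h2⟩
      refine ⟨h1, ?_⟩
      by_contra hx
      exact h2 (hsub (Finset.mem_sdiff.mpr ⟨h1, hx⟩))
    · rintro ⟨h1, h2⟩
      refine ⟨h1, fun hx => ?_⟩
      have hmem : x ∈ N s ∩ N (s + 2) := Finset.mem_inter.mpr ⟨h2, hx⟩
      rw [hdisj] at hmem
      exact absurd hmem (Finset.notMem_empty x)
  have h2 : ∑ v ∈ N (s + 1) ∩ N s, g v + ∑ v ∈ N (s + 1) \ N s, g v = S := by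
    rw [Finset.sum_inter_add_sum_sdiff]; exact hS2
  have h3 : ∑ v ∈ N (s + 1) \ N s, g v = ∑ v ∈ N s \ N (s + 1), g v :=
    sdiff_sum_eq g (hS2.trans hS1.symm)
  rw [heq]
  omega

end Helpers

/-- If `G₁` contains a Type-3 pair of neighbourhood chains (NC-T3),
then the disjoint union `G₁ ∪ G₂` is non-distance magic. -/
theorem disjoint_union_nct3_non_distance_magic {V₁ V₂ : Type*}
    [Fintype V₁] [Fintype V₂] (G₁ : SimpleGraph V₁) (G₂ : SimpleGraph V₂)
    (n1 n2 : ℕ) (T : NCT3 G₁ n1 n2) :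
    ¬ IsDistanceMagic (G₁ ⊕g G₂) := by
  rintro ⟨f, S, hf⟩
  set g : V₁ → ℕ := fun v => (f (Sum.inl v) : ℕ) + 1 with hg
  have hpos : ∀ v, 1 ≤ g v := fun v => Nat.le_add_left 1 _
  have hnbr : ∀ u : V₁, nbr (G₁ ⊕g G₂) (Sum.inl u) = (nbr G₁ u).image Sum.inl := by
    intro u
    ext x
    cases x with
    | inl x =>
        simp [nbr, SimpleGraph.mem_neighborFinset, SimpleGraph.sum_adj]
    | inr x =>
        simp [nbr, SimpleGraph.mem_neighborFinset, SimpleGraph.sum_adj]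
  have hsum : ∀ u : V₁, ∑ v ∈ nbr G₁ u, g v = S := by
    intro u
    have h := hf (Sum.inl u)
    rw [hnbr u, Finset.sum_image (fun a _ b _ h => Sum.inl_injective h)] at h
    exact h
  -- abbreviations
  set N1 : ℕ → Finset V₁ := fun s => nbr G₁ (T.c1.u s) with hN1
  set N2 : ℕ → Finset V₁ := fun s => nbr G₁ (T.c2.u s) with hN2
  set X1 : ℕ → ℕ := fun s => ∑ v ∈ N1 s \ N1 (s + 1), g v with hX1
  set X2 : ℕ → ℕ := fun s => ∑ v ∈ N2 s \ N2 (s + 1), g v with hX2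
  have hS1 : ∀ s, s < n1 → ∑ v ∈ N1 s, g v = S := fun s _ => hsum _
  have hS2 : ∀ s, s < n2 → ∑ v ∈ N2 s, g v = S := fun s _ => hsum _
  -- single step for chain 1
  have step1 : ∀ s, s + 3 < n1 → X1 (s + 1) + X1 s = S := by
    intro s hs
    exact chain_step g S N1 s (hS1 s (by omega)) (hS1 (s + 1) (by omega))
      (T.propI1 s (by omega))
      (T.c1.nonconsec s (s + 2) (by omega) (by omega) (by omega))
  have step1' : ∀ s, s + 4 ≤ n1 → X1 (s + 2) = X1 s := by
    intro s hs
    have h1 := step1 s (by omega)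
    have h2 : X1 (s + 2) + X1 (s + 1) = S := by
      have := chain_step g S N1 (s + 1) (hS1 (s + 1) (by omega)) (hS1 (s + 2) (by omega))
        (T.propI1 (s + 1) (by omega))
        (T.c1.nonconsec (s + 1) (s + 3) (by omega) (by omega) (by omega))
      simpa using this
    omega
  have step2 : ∀ s, s + 3 < n2 → X2 (s + 1) + X2 s = S := by
    intro s hs
    exact chain_step g S N2 s (hS2 s (by omega)) (hS2 (s + 1) (by omega))
      (T.propI2 s (by omega))
      (T.c2.nonconsec s (s + 2) (by omega) (by omega) (by omega))
  have step2' : ∀ s, s + 4 ≤ n2 → X2 (s + 2) = X2 s := by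
    intro s hs
    have h1 := step2 s (by omega)
    have h2 : X2 (s + 2) + X2 (s + 1) = S := by
      have := chain_step g S N2 (s + 1) (hS2 (s + 1) (by omega)) (hS2 (s + 2) (by omega))
        (T.propI2 (s + 1) (by omega))
        (T.c2.nonconsec (s + 1) (s + 3) (by omega) (by omega) (by omega))
      simpa using this
    omega
  have iter1 : ∀ i t, i + 1 + 2 * t < n1 → X1 (i + 2 * t) = X1 i := by
    intro i t
    induction t with
    | zero => intro _; norm_num
    | succ t ih =>
        intro ht
        have h1 : X1 (i + 2 * t + 2) = X1 (i + 2 * t) := step1' _ (by omega)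
        have h2 : X1 (i + 2 * t) = X1 i := ih (by omega)
        have : i + 2 * (t + 1) = i + 2 * t + 2 := by omega
        rw [this, h1, h2]
  have iter2 : ∀ j t, j + 1 + 2 * t < n2 → X2 (j + 2 * t) = X2 j := by
    intro j t
    induction t with
    | zero => intro _; norm_num
    | succ t ih =>
        intro ht
        have h1 : X2 (j + 2 * t + 2) = X2 (j + 2 * t) := step2' _ (by omega)
        have h2 : X2 (j + 2 * t) = X2 j := ih (by omega)
        have : j + 2 * (t + 1) = j + 2 * t + 2 := by omega
        rw [this, h1, h2]
  -- now use property II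
  obtain ⟨i, j, r, hi1, hj1, _, hir, hjr, hsub1, hsub2, hcard⟩ := T.propII
  -- sums over reversed differences
  have hrev1 : ∑ v ∈ N1 (i + 1 + 2 * r) \ N1 (i + 2 * r), g v = X1 i := by
    have h := sdiff_sum_eq g
      ((hS1 (i + 1 + 2 * r) (by omega)).trans (hS1 (i + 2 * r) (by omega)).symm)
    have : i + 2 * r + 1 = i + 1 + 2 * r := by omega
    rw [h]
    calc ∑ v ∈ N1 (i + 2 * r) \ N1 (i + 1 + 2 * r), g v
        = X1 (i + 2 * r) := by rw [hX1]; simp only [this]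
      _ = X1 i := iter1 i r hir
  have hrev2 : ∑ v ∈ N2 (j + 1 + 2 * r) \ N2 (j + 2 * r), g v = X2 j := by
    have h := sdiff_sum_eq g
      ((hS2 (j + 1 + 2 * r) (by omega)).trans (hS2 (j + 2 * r) (by omega)).symm)
    have : j + 2 * r + 1 = j + 1 + 2 * r := by omega
    rw [h]
    calc ∑ v ∈ N2 (j + 2 * r) \ N2 (j + 1 + 2 * r), g v
        = X2 (j + 2 * r) := by rw [hX2]; simp only [this]
      _ = X2 j := iter2 j r hjr
  -- inclusion 1 : N2 j \ N2 (j+1) ⊆ N1 i \ N1 (i+1)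
  have e1 : ∑ v ∈ (N1 i \ N1 (i + 1)) \ (N2 j \ N2 (j + 1)), g v + X2 j = X1 i := by
    have := Finset.sum_sdiff (f := g) hsub1
    exact this
  have e2 : ∑ v ∈ (N2 (j + 1 + 2 * r) \ N2 (j + 2 * r)) \
      (N1 (i + 1 + 2 * r) \ N1 (i + 2 * r)), g v + X1 i = X2 j := by
    have h := Finset.sum_sdiff (f := g) hsub2
    rw [hrev1, hrev2] at h
    exact h
  have hz1 : ∑ v ∈ (N1 i \ N1 (i + 1)) \ (N2 j \ N2 (j + 1)), g v = 0 := by omega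
  have hz2 : ∑ v ∈ (N2 (j + 1 + 2 * r) \ N2 (j + 2 * r)) \
      (N1 (i + 1 + 2 * r) \ N1 (i + 2 * r)), g v = 0 := by omega
  have hc1 : ((N1 i \ N1 (i + 1)) \ (N2 j \ N2 (j + 1))) = ∅ := by
    rw [Finset.eq_empty_iff_forall_notMem]
    intro x hx
    have h0 := (Finset.sum_eq_zero_iff.mp hz1) x hx
    have h1 := hpos x
    omega
  have hc2 : ((N2 (j + 1 + 2 * r) \ N2 (j + 2 * r)) \
      (N1 (i + 1 + 2 * r) \ N1 (i + 2 * r))) = ∅ := by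
    rw [Finset.eq_empty_iff_forall_notMem]
    intro x hx
    have h0 := (Finset.sum_eq_zero_iff.mp hz2) x hx
    have h1 := hpos x
    omega
  simp only [hN1, hN2] at hc1 hc2
  rw [hc1, hc2] at hcard
  simp at hcard
end
end
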